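/- arXiv:1910.07888 — 11 statements merged into one kernel-verified Lean document; each statement's English description precedes it below -/
import Mathlib

section
/- Let x : ℝ → ℝ^N be differentiable on an interval, with distinct coordinates, satisfying x_i'(t) = Σ_{j≠i} 1/(x_i(t) − x_j(t)) for each i. Then ‖x(t)‖² = N(N−1)t + ‖x(0)‖² for all t in the interval. -/
open Finset

/-- Elementary symmetric polynomial of degree `k` in the variables `x i`, `i ∈ s`. -/
noncomputable def esymm {N : ℕ} (s : Finset (Fin N)) (k : ℕ) (x : Fin N → ℝ) : ℝ :=
  ∑ A ∈ s.powersetCard k, ∏ i ∈ A, x i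

theorem stmt5 (N : ℕ) (I : Set ℝ) (hI : Convex ℝ I) (h0 : (0 : ℝ) ∈ I)
    (x : ℝ → Fin N → ℝ)
    (hdist : ∀ t ∈ I, ∀ i j : Fin N, i ≠ j → x t i ≠ x t j)
    (hode : ∀ t ∈ I, ∀ i : Fin N, HasDerivAt (fun s => x s i)
      (∑ j ∈ Finset.univ.erase i, 1 / (x t i - x t j)) t) :
    ∀ t ∈ I, ∑ i, (x t i) ^ 2 = (N : ℝ) * ((N : ℝ) - 1) * t + ∑ i, (x 0 i) ^ 2 := by
  have key : ∀ s ∈ I, HasDerivAt (fun u => ∑ i, (x u i) ^ 2)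
      ((N : ℝ) * ((N : ℝ) - 1)) s := by
    intro s hs
    have h1 : HasDerivAt (fun u => ∑ i, (x u i) ^ 2)
        (∑ i, 2 * x s i * (∑ j ∈ Finset.univ.erase i, 1 / (x s i - x s j))) s := by
      apply HasDerivAt.fun_sum
      intro i _
      have := (hode s hs i).fun_pow 2
      simpa [pow_one, mul_comm, mul_assoc] using this
    have hsum : (∑ i, 2 * x s i * (∑ j ∈ Finset.univ.erase i, 1 / (x s i - x s j)))
        = (N : ℝ) * ((N : ℝ) - 1) := by
      set g : Fin N → Fin N → ℝ := fun i j => 2 * x s i / (x s i - x s j) with hg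
      have hstep : (∑ i, 2 * x s i * (∑ j ∈ Finset.univ.erase i, 1 / (x s i - x s j)))
          = ∑ i, ∑ j ∈ Finset.univ.erase i, g i j := by
        refine Finset.sum_congr rfl fun i _ => ?_
        rw [Finset.mul_sum]
        refine Finset.sum_congr rfl fun j _ => ?_
        simp [hg, mul_one_div, div_eq_mul_inv]
      have hswap : (∑ i, ∑ j ∈ Finset.univ.erase i, g i j)
          = ∑ i, ∑ j ∈ Finset.univ.erase i, g j i := by
        rw [Finset.sum_comm' (t' := Finset.univ) (s' := fun j => Finset.univ.erase j)]
        intro i j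
        simp [Finset.mem_erase, eq_comm, ne_comm]
      have hdouble : (∑ i, ∑ j ∈ Finset.univ.erase i, g i j)
          + (∑ i, ∑ j ∈ Finset.univ.erase i, g i j)
          = ∑ i : Fin N, ∑ j ∈ Finset.univ.erase i, (2 : ℝ) := by
        nth_rewrite 2 [hswap]
        rw [← Finset.sum_add_distrib]
        refine Finset.sum_congr rfl fun i _ => ?_
        rw [← Finset.sum_add_distrib]
        refine Finset.sum_congr rfl fun j hj => ?_
        have hji : j ≠ i := (Finset.mem_erase.mp hj).1
        have hne : x s i - x s j ≠ 0 := sub_ne_zero.mpr (hdist s hs i j hji.symm)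
        have hne' : x s j - x s i ≠ 0 := sub_ne_zero.mpr (hdist s hs j i hji)
        simp only [hg]
        rw [div_add_div _ _ hne hne', div_eq_iff (mul_ne_zero hne hne')]
        ring
      have hcard : ∀ i : Fin N, (Finset.univ.erase i).card = N - 1 := by
        intro i
        rw [Finset.card_erase_of_mem (Finset.mem_univ i), Finset.card_univ, Fintype.card_fin]
      have h2 : (∑ i : Fin N, ∑ j ∈ Finset.univ.erase i, (2 : ℝ))
          = (N : ℝ) * ((N : ℝ) - 1) * 2 := by
        simp only [Finset.sum_const, hcard, nsmul_eq_mul, Finset.card_univ,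
          Fintype.card_fin]
        rcases Nat.eq_zero_or_pos N with h | h
        · simp [h]
        · rw [Nat.cast_sub h]
          push_cast
          ring
      have := hdouble.trans h2
      linarith [hstep]
    rwa [hsum] at h1
  intro t ht
  have hφ : ∀ s ∈ I, HasDerivWithinAt
      (fun u => (∑ i, (x u i) ^ 2) - (N : ℝ) * ((N : ℝ) - 1) * u) (0 : ℝ) I s := by
    intro s hs
    have := (key s hs).sub (((hasDerivAt_id s).const_mul ((N : ℝ) * ((N : ℝ) - 1))))
    exact (by simpa using this.hasDerivWithinAt : HasDerivWithinAt ((fun u => ∑ i, x u i ^ 2) - fun y => (N : ℝ) * ((N : ℝ) - 1) * y) 0 I s)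
  have hbound : ∀ s ∈ I, ‖(0 : ℝ)‖ ≤ (0 : ℝ) := by simp
  have := hI.norm_image_sub_le_of_norm_hasDerivWithin_le hφ hbound h0 ht
  simp only [zero_mul, norm_le_zero_iff, sub_eq_zero] at this
  have : (∑ i, (x t i) ^ 2) - (N : ℝ) * ((N : ℝ) - 1) * t
      = (∑ i, (x 0 i) ^ 2) - (N : ℝ) * ((N : ℝ) - 1) * 0 := this
  linarith
end

section
/- Let ν > 0 and x : ℝ → ℝ^N be a solution of the B_N gradient ODE x_i' = Σ_{j≠i}(1/(x_i−x_j) + 1/(x_i+x_j)) + ν/x_i in the open chamber {x_1 > ... > x_N > 0}. Then ‖x(t)‖² = 2N(N+ν−1)t + ‖x(0)‖². -/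
open Finset

theorem stmt6 (N : ℕ) (ν : ℝ) (hν : 0 < ν) (I : Set ℝ) (hI : Convex ℝ I)
    (h0 : (0 : ℝ) ∈ I) (x : ℝ → Fin N → ℝ)
    (hcham : ∀ t ∈ I, (∀ i j : Fin N, i < j → x t j < x t i) ∧ ∀ i : Fin N, 0 < x t i)
    (hode : ∀ t ∈ I, ∀ i : Fin N, HasDerivAt (fun s => x s i)
      (∑ j ∈ Finset.univ.erase i,
          (1 / (x t i - x t j) + 1 / (x t i + x t j)) + ν / x t i) t) :
    ∀ t ∈ I, ∑ i, (x t i) ^ 2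
      = 2 * (N : ℝ) * ((N : ℝ) + ν - 1) * t + ∑ i, (x 0 i) ^ 2 := by
  set c : ℝ := 2 * (N : ℝ) * ((N : ℝ) + ν - 1) with hc
  -- The key derivative computation
  have key : ∀ t ∈ I, HasDerivAt (fun s => ∑ i, (x s i) ^ 2) c t := by
    intro t ht
    have hne : ∀ i j : Fin N, i ≠ j → x t i ≠ x t j := by
      intro i j hij
      rcases lt_or_gt_of_ne hij with h | h
      · exact ((hcham t ht).1 i j h).ne'
      · exact ((hcham t ht).1 j i h).ne
    have hpos := (hcham t ht).2
    have hsum : ∀ i : Fin N, HasDerivAt (fun s => (x s i) ^ 2)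
        (2 * x t i * (∑ j ∈ Finset.univ.erase i,
          (1 / (x t i - x t j) + 1 / (x t i + x t j)) + ν / x t i)) t := by
      intro i
      have := (hode t ht i).fun_pow 2
      simpa [mul_comm, mul_assoc, mul_left_comm] using this
    have H := HasDerivAt.fun_sum (fun i (_ : i ∈ Finset.univ) => hsum i)
    have expand : ∀ i : Fin N, 2 * x t i * (∑ j ∈ Finset.univ.erase i,
          (1 / (x t i - x t j) + 1 / (x t i + x t j)) + ν / x t i)
        = (∑ j ∈ Finset.univ.erase i,
            2 * (x t i / (x t i - x t j) + x t i / (x t i + x t j))) + 2 * ν := by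
      intro i
      rw [mul_add, Finset.mul_sum]
      congr 1
      · exact Finset.sum_congr rfl fun j _ => by ring
      · field_simp [(hpos i).ne']
    set f : Fin N → Fin N → ℝ := fun i j =>
      2 * (x t i / (x t i - x t j) + x t i / (x t i + x t j)) with hf
    have hswap : ∑ i, ∑ j ∈ Finset.univ.erase i, f i j
        = ∑ i, ∑ j ∈ Finset.univ.erase i, f j i := by
      refine Finset.sum_comm' ?_
      intro i j
      simp [Finset.mem_erase, eq_comm, and_comm, ne_comm]
    have hpair : ∀ i, ∀ j ∈ Finset.univ.erase i, f i j + f j i = 4 := by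
      intro i j hj
      have hij : x t i ≠ x t j := hne i j (Finset.ne_of_mem_erase hj).symm
      have h1 : x t i - x t j ≠ 0 := sub_ne_zero.mpr hij
      have h2 : x t i + x t j ≠ 0 := (add_pos (hpos i) (hpos j)).ne'
      have h1' : x t j - x t i ≠ 0 := sub_ne_zero.mpr hij.symm
      have h2' : x t j + x t i ≠ 0 := (add_pos (hpos j) (hpos i)).ne'
      simp only [hf]
      field_simp
      ring
    have hS : ∑ i, ∑ j ∈ Finset.univ.erase i, f i j = 2 * N * (N - 1) := by
      have h2S : 2 * (∑ i, ∑ j ∈ Finset.univ.erase i, f i j)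
          = ∑ i : Fin N, ∑ j ∈ Finset.univ.erase i, (4 : ℝ) := by
        rw [two_mul]
        nth_rewrite 2 [hswap]
        rw [← Finset.sum_add_distrib]
        refine Finset.sum_congr rfl fun i _ => ?_
        rw [← Finset.sum_add_distrib]
        exact Finset.sum_congr rfl fun j hj => hpair i j hj
      have hcard : ∀ i : Fin N, (Finset.univ.erase i).card = N - 1 := by
        intro i
        rw [Finset.card_erase_of_mem (Finset.mem_univ i), Finset.card_univ, Fintype.card_fin]
      rcases Nat.eq_zero_or_pos N with h | h
      · subst h; simp
      · have : 2 * (∑ i, ∑ j ∈ Finset.univ.erase i, f i j)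
            = (N : ℝ) * ((N - 1 : ℕ) * 4) := by
          rw [h2S]
          simp [Finset.sum_const, hcard, Finset.card_univ, mul_comm]
        have hN1 : ((N - 1 : ℕ) : ℝ) = (N : ℝ) - 1 := by
          push_cast [Nat.cast_sub h]
          ring
        rw [hN1] at this
        linarith
    have hconv : ∑ i, (2 * x t i * (∑ j ∈ Finset.univ.erase i,
          (1 / (x t i - x t j) + 1 / (x t i + x t j)) + ν / x t i)) = c := by
      rw [Finset.sum_congr rfl fun i _ => expand i, Finset.sum_add_distrib, hS]
      simp only [Finset.sum_const, Finset.card_univ, Fintype.card_fin, nsmul_eq_mul, hc]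
      ring
    rw [hconv] at H
    exact H
  -- constancy of the difference
  intro t ht
  have hg : ∀ u ∈ I, HasDerivWithinAt (fun s => (∑ i, (x s i) ^ 2) - c * s) 0 I u := by
    intro u hu
    have := (((key u hu).fun_sub ((hasDerivAt_id u).const_mul c)).hasDerivWithinAt (s := I))
    simpa using this
  have := Convex.norm_image_sub_le_of_norm_hasDerivWithin_le (C := 0) hg
    (fun u _ => by simp) hI h0 ht
  simp only [zero_mul, norm_le_zero_iff, sub_eq_zero, mul_zero, sub_zero] at this
  linarith [this]
end

section
/- Let x : ℝ → ℝ^N solve the D_N gradient ODE x_i' = Σ_{j≠i}(1/(x_i−x_j) + 1/(x_i+x_j)) on the open chamber {x_1 > ... > x_{N-1} > |x_N|}. Then ‖x(t)‖² = 2N(N−1)t + ‖x(0)‖². -/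
open Finset

lemma pairsum {N : ℕ} (x : Fin N → ℝ) (h : ∀ i j : Fin N, i < j → |x j| < x i)
    {i j : Fin N} (hij : i ≠ j) :
    x i * (1 / (x i - x j) + 1 / (x i + x j)) + x j * (1 / (x j - x i) + 1 / (x j + x i)) = 2 := by
  wlog hlt : i < j generalizing i j
  · rw [add_comm]; exact this hij.symm (by omega)
  have h1 := h i j hlt
  have ha : x i - x j ≠ 0 := by cases abs_lt.1 h1; nlinarith
  have hb : x i + x j ≠ 0 := by cases abs_lt.1 h1; nlinarith
  have hc : x j - x i ≠ 0 := fun hh => ha (by linarith [sub_eq_zero.1 hh])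
  have hb' : x j + x i ≠ 0 := by rw [add_comm]; exact hb
  field_simp
  ring

lemma keysum {N : ℕ} (x : Fin N → ℝ) (h : ∀ i j : Fin N, i < j → |x j| < x i) :
    ∑ i, x i * ∑ j ∈ Finset.univ.erase i, (1 / (x i - x j) + 1 / (x i + x j))
      = (N : ℝ) * ((N : ℝ) - 1) := by
  set g : Fin N → Fin N → ℝ := fun i j => x i * (1 / (x i - x j) + 1 / (x i + x j)) with hg
  have hS : ∀ i, x i * ∑ j ∈ Finset.univ.erase i, (1 / (x i - x j) + 1 / (x i + x j))
      = ∑ j ∈ Finset.univ.erase i, g i j := fun i => Finset.mul_sum _ _ _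
  simp_rw [hS]
  have hswap : ∑ i, ∑ j ∈ Finset.univ.erase i, g i j
      = ∑ i, ∑ j ∈ Finset.univ.erase i, g j i := by
    rw [Finset.sum_comm' (t' := Finset.univ) (s' := fun j => Finset.univ.erase j)]
    intro i j
    simp [ne_comm, eq_comm]
  have h2 : (2:ℝ) * ∑ i, ∑ j ∈ Finset.univ.erase i, g i j = 2 * ((N:ℝ) * ((N:ℝ)-1)) := by
    have : (2:ℝ) * ∑ i, ∑ j ∈ Finset.univ.erase i, g i j
        = ∑ i, ∑ j ∈ Finset.univ.erase i, (g i j + g j i) := by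
      rw [two_mul]; nth_rewrite 2 [hswap]
      rw [← Finset.sum_add_distrib]
      exact Finset.sum_congr rfl fun i _ => (Finset.sum_add_distrib).symm
    rw [this]
    have : ∑ i : Fin N, ∑ j ∈ Finset.univ.erase i, (g i j + g j i)
        = ∑ i : Fin N, ∑ _j ∈ Finset.univ.erase i, (2:ℝ) := by
      refine Finset.sum_congr rfl fun i _ => Finset.sum_congr rfl fun j hj => ?_
      exact pairsum x h (Ne.symm (Finset.ne_of_mem_erase hj))
    rw [this]
    simp [Finset.card_erase_of_mem]
    cases N with
    | zero => simp
    | succ n => push_cast; ring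
  linarith


theorem stmt7 (N : ℕ) (I : Set ℝ) (hI : Convex ℝ I) (h0 : (0 : ℝ) ∈ I)
    (x : ℝ → Fin N → ℝ)
    (hcham : ∀ t ∈ I, ∀ i j : Fin N, i < j → |x t j| < x t i)
    (hode : ∀ t ∈ I, ∀ i : Fin N, HasDerivAt (fun s => x s i)
      (∑ j ∈ Finset.univ.erase i, (1 / (x t i - x t j) + 1 / (x t i + x t j))) t) :
    ∀ t ∈ I, ∑ i, (x t i) ^ 2 = 2 * (N : ℝ) * ((N : ℝ) - 1) * t + ∑ i, (x 0 i) ^ 2 := by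
  set c : ℝ := 2 * (N : ℝ) * ((N : ℝ) - 1) with hc
  set F : ℝ → ℝ := fun t => (∑ i, (x t i) ^ 2) - c * t with hF
  have hder : ∀ t ∈ I, HasDerivAt F 0 t := by
    intro t ht
    have h1 : HasDerivAt (fun s => ∑ i, (x s i) ^ 2)
        (∑ i, 2 * x t i ^ 1 * ∑ j ∈ Finset.univ.erase i,
          (1 / (x t i - x t j) + 1 / (x t i + x t j))) t := by
      apply HasDerivAt.fun_sum
      intro i _
      simpa using (hode t ht i).fun_pow 2
    have h2 : (∑ i, 2 * x t i ^ 1 * ∑ j ∈ Finset.univ.erase i,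
        (1 / (x t i - x t j) + 1 / (x t i + x t j))) = c := by
      rw [hc]
      have := keysum (x t) (hcham t ht)
      simp_rw [pow_one, mul_assoc]
      rw [← Finset.mul_sum, this]
      try ring
    rw [h2] at h1
    have h3 := h1.sub ((hasDerivAt_id t).const_mul c)
    simp only [mul_one, sub_self] at h3
    exact h3
  intro t ht
  have key : F t = F 0 := by
    have hb : ∀ s ∈ I, ‖(1 : ℝ →L[ℝ] ℝ).smulRight (0:ℝ)‖ ≤ 0 := by
      intro s _; simp
    have := hI.norm_image_sub_le_of_norm_hasFDerivWithin_le
      (f := F) (f' := fun _ => (1 : ℝ →L[ℝ] ℝ).smulRight (0:ℝ)) (C := 0)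
      (fun s hs => ((hder s hs).hasFDerivAt).hasFDerivWithinAt) hb h0 ht
    simp only [zero_mul, norm_le_zero_iff, sub_eq_zero] at this
    exact this
  simp only [hF] at key
  have : c * 0 = 0 := mul_zero c
  linarith [key]
end

section
/- Let x : I → ℝ^N solve the A_{N−1} ODE x_i' = Σ_{j≠i} 1/(x_i − x_j) with distinct coordinates. Then for each k with 2 ≤ k ≤ N, the function t ↦ e_k(x(t)) satisfies d/dt e_k(x(t)) = −(1/2)(N−k+2)(N−k+1) · e_{k-2}(x(t)), and d/dt e_1(x(t)) = 0. -/
open Finset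

namespace Stmt8Aux

variable {N : ℕ}

/-- reindex sets of size m+1 containing i by their erasure -/
lemma bij1 (s : Finset (Fin N)) (m : ℕ) (i : Fin N) (hi : i ∈ s) (g : Finset (Fin N) → ℝ) :
    ∑ A ∈ (s.powersetCard (m + 1)).filter (i ∈ ·), g (A.erase i)
      = ∑ B ∈ (s.erase i).powersetCard m, g B := by
  refine Finset.sum_nbij' (·.erase i) (insert i ·) ?_ ?_ ?_ ?_ ?_
  · intro A hA
    simp only [mem_filter, Finset.mem_powersetCard] at hA
    obtain ⟨⟨hAs, hAc⟩, hiA⟩ := hA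
    refine Finset.mem_powersetCard.2 ⟨Finset.erase_subset_erase _ hAs, ?_⟩
    simp [Finset.card_erase_of_mem hiA, hAc]
  · intro B hB
    rw [Finset.mem_powersetCard] at hB
    obtain ⟨hBs, hBc⟩ := hB
    have hiB : i ∉ B := fun h => (Finset.mem_erase.1 (hBs h)).1 rfl
    refine mem_filter.2 ⟨Finset.mem_powersetCard.2 ⟨?_, ?_⟩, mem_insert_self _ _⟩
    · exact Finset.insert_subset hi (hBs.trans (Finset.erase_subset _ _))
    · rw [Finset.card_insert_of_notMem hiB, hBc]
  · intro A hA
    exact Finset.insert_erase (mem_filter.1 hA).2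
  · intro B hB
    apply Finset.erase_insert
    rw [Finset.mem_powersetCard] at hB
    exact fun h => (Finset.mem_erase.1 (hB.1 h)).1 rfl
  · intro A _
    rfl

lemma swap_lemma (S : Finset (Finset (Fin N))) (f : Finset (Fin N) → Fin N → ℝ) :
    ∑ A ∈ S, ∑ i ∈ A, f A i = ∑ i : Fin N, ∑ A ∈ S.filter (i ∈ ·), f A i := by
  have h1 : ∀ A ∈ S, ∑ i ∈ A, f A i = ∑ i : Fin N, if i ∈ A then f A i else 0 := by
    intro A _
    rw [Finset.sum_ite_mem, Finset.univ_inter]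
  rw [Finset.sum_congr rfl h1, Finset.sum_comm]
  exact Finset.sum_congr rfl fun i _ => (Finset.sum_filter _ _).symm

lemma offDiag_sum (f : Fin N → Fin N → ℝ) :
    ∑ i : Fin N, ∑ l ∈ Finset.univ.erase i, f i l
      = ∑ p ∈ (Finset.univ : Finset (Fin N)).offDiag, f p.1 p.2 := by
  have h1 : ∀ i : Fin N, (Finset.univ : Finset (Fin N)).erase i
      = Finset.univ.filter (fun l => ¬ (i, l).1 = (i, l).2) := by
    intro i
    ext l
    simp [eq_comm]
  rw [show (Finset.univ : Finset (Fin N)).offDiag = (Finset.univ ×ˢ Finset.univ).filter (fun a : Fin N × Fin N => a.fst ≠ a.snd) by ext; simp, Finset.sum_filter, Finset.sum_product]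
  refine Finset.sum_congr rfl fun i _ => ?_
  rw [h1 i, Finset.sum_filter]

lemma cancel (f : Fin N → Fin N → ℝ) (hf : ∀ i l : Fin N, i ≠ l → f i l + f l i = 0) :
    ∑ p ∈ (Finset.univ : Finset (Fin N)).offDiag, f p.1 p.2 = 0 := by
  refine Finset.sum_involution (fun p _ => Prod.swap p) ?_ ?_ ?_ ?_
  · intro p hp
    exact hf p.1 p.2 (Finset.mem_offDiag.1 hp).2.2
  · intro p hp _
    intro h
    exact (Finset.mem_offDiag.1 hp).2.2 (congrArg Prod.fst h).symm
  · intro p hp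
    have := Finset.mem_offDiag.1 hp
    exact Finset.mem_offDiag.2 ⟨this.2.1, this.1, Ne.symm this.2.2⟩
  · intro p _
    exact Prod.swap_swap p

lemma esymm_rec (y : Fin N → ℝ) (m : ℕ) (s : Finset (Fin N)) (l : Fin N) (hl : l ∈ s) :
    ∑ B ∈ s.powersetCard (m + 1), ∏ j ∈ B, y j
      = (∑ B ∈ (s.erase l).powersetCard (m + 1), ∏ j ∈ B, y j)
        + y l * ∑ B ∈ (s.erase l).powersetCard m, ∏ j ∈ B, y j := by
  have hsplit := Finset.sum_filter_add_sum_filter_not (s.powersetCard (m + 1)) (l ∈ ·)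
      (fun B => ∏ j ∈ B, y j)
  rw [← hsplit]
  have h2 : (s.powersetCard (m + 1)).filter (fun B => ¬ l ∈ B)
      = (s.erase l).powersetCard (m + 1) := by
    ext B
    simp only [mem_filter, Finset.mem_powersetCard, Finset.subset_erase]
    tauto
  have h3 : ∑ B ∈ (s.powersetCard (m + 1)).filter (l ∈ ·), ∏ j ∈ B, y j
      = y l * ∑ B ∈ (s.erase l).powersetCard m, ∏ j ∈ B, y j := by
    rw [← bij1 s m l hl (fun B => ∏ j ∈ B, y j), Finset.mul_sum]
    refine Finset.sum_congr rfl fun B hB => ?_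
    exact (Finset.mul_prod_erase B y (mem_filter.1 hB).2).symm
  rw [h2, h3]
  ring

lemma countG (y : Fin N → ℝ) (m : ℕ) :
    ∑ p ∈ (Finset.univ : Finset (Fin N)).offDiag,
        esymm ((Finset.univ.erase p.1).erase p.2) m y
      = (((N - m) * (N - m) - (N - m) : ℕ) : ℝ) * esymm Finset.univ m y := by
  have ha : ∀ i l : Fin N, esymm ((Finset.univ.erase i).erase l) m y
      = ∑ C ∈ (Finset.univ : Finset (Fin N)).powersetCard m,
          if i ∉ C ∧ l ∉ C then ∏ j ∈ C, y j else 0 := by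
    intro i l
    rw [esymm, ← Finset.sum_filter]
    congr 1
    ext C
    simp only [mem_filter, Finset.mem_powersetCard, Finset.subset_erase]
    tauto
  calc ∑ p ∈ (Finset.univ : Finset (Fin N)).offDiag,
        esymm ((Finset.univ.erase p.1).erase p.2) m y
      = ∑ p ∈ (Finset.univ : Finset (Fin N)).offDiag,
          ∑ C ∈ (Finset.univ : Finset (Fin N)).powersetCard m,
            if p.1 ∉ C ∧ p.2 ∉ C then ∏ j ∈ C, y j else 0 := by
        exact Finset.sum_congr rfl fun p _ => ha p.1 p.2
    _ = ∑ C ∈ (Finset.univ : Finset (Fin N)).powersetCard m,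
          ∑ p ∈ (Finset.univ : Finset (Fin N)).offDiag,
            if p.1 ∉ C ∧ p.2 ∉ C then ∏ j ∈ C, y j else 0 := Finset.sum_comm
    _ = ∑ C ∈ (Finset.univ : Finset (Fin N)).powersetCard m,
          (((N - m) * (N - m) - (N - m) : ℕ) : ℝ) * ∏ j ∈ C, y j := by
        refine Finset.sum_congr rfl fun C hC => ?_
        rw [← Finset.sum_filter]
        have hfil : (Finset.univ : Finset (Fin N)).offDiag.filter
            (fun p => p.1 ∉ C ∧ p.2 ∉ C) = (Finset.univ \ C).offDiag := by
          ext p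
          simp only [mem_filter, Finset.mem_offDiag, Finset.mem_sdiff, Finset.mem_univ,
            true_and]
          tauto
        have hcard : (Finset.univ \ C).card = N - m := by
          rw [Finset.card_sdiff_of_subset (Finset.subset_univ C), Finset.card_univ,
            Fintype.card_fin, (Finset.mem_powersetCard.1 hC).2]
        rw [hfil, Finset.sum_const, Finset.offDiag_card, hcard, nsmul_eq_mul]
    _ = (((N - m) * (N - m) - (N - m) : ℕ) : ℝ) * esymm Finset.univ m y := by
        rw [esymm, Finset.mul_sum]

lemma hasDeriv (x : ℝ → Fin N → ℝ) (t : ℝ) (k : ℕ) (d : Fin N → ℝ)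
    (hode : ∀ i : Fin N, HasDerivAt (fun s => x s i) (d i) t) :
    HasDerivAt (fun s => esymm Finset.univ (k + 1) (x s))
      (∑ i : Fin N,
        (∑ B ∈ (Finset.univ.erase i).powersetCard k, ∏ j ∈ B, x t j) * d i) t := by
  have h : HasDerivAt (fun s => esymm Finset.univ (k + 1) (x s))
      (∑ A ∈ (Finset.univ : Finset (Fin N)).powersetCard (k + 1),
        ∑ i ∈ A, (∏ j ∈ A.erase i, x t j) * d i) t := by
    show HasDerivAt (fun s => ∑ A ∈ (Finset.univ : Finset (Fin N)).powersetCard (k + 1),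
      ∏ i ∈ A, x s i) _ t
    apply HasDerivAt.fun_sum
    intro A _
    have := HasDerivAt.fun_finsetProd (u := A) (f := fun i s => x s i) (f' := fun i => d i)
      (x := t) (fun i _ => hode i)
    simpa [smul_eq_mul] using this
  have e : (∑ A ∈ (Finset.univ : Finset (Fin N)).powersetCard (k + 1),
        ∑ i ∈ A, (∏ j ∈ A.erase i, x t j) * d i)
      = ∑ i : Fin N,
        (∑ B ∈ (Finset.univ.erase i).powersetCard k, ∏ j ∈ B, x t j) * d i := by
    rw [swap_lemma]
    refine Finset.sum_congr rfl fun i _ => ?_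
    rw [← Finset.sum_mul, bij1 Finset.univ k i (Finset.mem_univ i) (fun B => ∏ j ∈ B, x t j)]
  exact e ▸ h

end Stmt8Aux

open Stmt8Aux in
theorem stmt8 (N : ℕ) (I : Set ℝ) (x : ℝ → Fin N → ℝ)
    (hcham : ∀ t ∈ I, ∀ i j : Fin N, i < j → x t j < x t i)
    (hode : ∀ t ∈ I, ∀ i : Fin N, HasDerivAt (fun s => x s i)
      (∑ j ∈ Finset.univ.erase i, 1 / (x t i - x t j)) t) :
    ∀ t ∈ I,
      (∀ k : ℕ, 2 ≤ k → k ≤ N →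
        HasDerivAt (fun s => esymm Finset.univ k (x s))
          (-(1 / 2) * ((N : ℝ) - k + 2) * ((N : ℝ) - k + 1)
            * esymm Finset.univ (k - 2) (x t)) t) ∧
      HasDerivAt (fun s => esymm Finset.univ 1 (x s)) 0 t := by
  intro t ht
  set y : Fin N → ℝ := x t with hy_def
  have hy : ∀ i l : Fin N, i ≠ l → y i ≠ y l := by
    intro i l h
    rcases lt_or_gt_of_ne h with h' | h'
    · exact (hcham t ht i l h').ne'
    · exact (hcham t ht l i h').ne
  set d : Fin N → ℝ := fun i => ∑ l ∈ Finset.univ.erase i, 1 / (y i - y l) with hd_def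
  have hode' : ∀ i : Fin N, HasDerivAt (fun s => x s i) (d i) t := fun i => hode t ht i
  constructor
  · intro k hk2 hkN
    set m : ℕ := k - 2 with hm_def
    have hkm : k = m + 2 := by omega
    have hderiv := hasDeriv x t (m + 1) d hode'
    have hk1 : m + 1 + 1 = k := by omega
    rw [hk1] at hderiv
    set F : Fin N → Fin N → ℝ := fun i l =>
      ∑ B ∈ ((Finset.univ.erase i).erase l).powersetCard (m + 1), ∏ j ∈ B, y j with hF_def
    set G : Fin N → Fin N → ℝ := fun i l =>
      ∑ B ∈ ((Finset.univ.erase i).erase l).powersetCard m, ∏ j ∈ B, y j with hG_def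
    have hFsymm : ∀ i l, F i l = F l i := by
      intro i l; simp only [hF_def, Finset.erase_right_comm]
    have hGsymm : ∀ i l, G i l = G l i := by
      intro i l; simp only [hG_def, Finset.erase_right_comm]
    have key : (∑ i : Fin N,
          (∑ B ∈ (Finset.univ.erase i).powersetCard (m + 1), ∏ j ∈ B, y j) * d i)
        = -(1 / 2) * ((N : ℝ) - k + 2) * ((N : ℝ) - k + 1) * esymm Finset.univ m y := by
      have step1 : (∑ i : Fin N,
            (∑ B ∈ (Finset.univ.erase i).powersetCard (m + 1), ∏ j ∈ B, y j) * d i)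
          = ∑ p ∈ (Finset.univ : Finset (Fin N)).offDiag,
              (∑ B ∈ (Finset.univ.erase p.1).powersetCard (m + 1), ∏ j ∈ B, y j)
                * (1 / (y p.1 - y p.2)) := by
        refine Eq.trans ?_ (offDiag_sum (fun i l =>
          (∑ B ∈ (Finset.univ.erase i).powersetCard (m + 1), ∏ j ∈ B, y j)
            * (1 / (y i - y l))))
        refine Finset.sum_congr rfl fun i _ => ?_
        simp only [hd_def]
        rw [Finset.mul_sum]
      have step2 : ∀ p ∈ (Finset.univ : Finset (Fin N)).offDiag,
          (∑ B ∈ (Finset.univ.erase p.1).powersetCard (m + 1), ∏ j ∈ B, y j)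
              * (1 / (y p.1 - y p.2))
            = (F p.1 p.2 * (1 / (y p.1 - y p.2))
                + (1 / 2) * G p.1 p.2 * ((y p.1 + y p.2) / (y p.1 - y p.2)))
              + (-(1 / 2)) * G p.1 p.2 := by
        intro p hp
        have hne := (Finset.mem_offDiag.1 hp).2.2
        have hl : p.2 ∈ Finset.univ.erase p.1 :=
          Finset.mem_erase.2 ⟨Ne.symm hne, Finset.mem_univ _⟩
        rw [esymm_rec y m (Finset.univ.erase p.1) p.2 hl]
        have hc : y p.1 - y p.2 ≠ 0 := sub_ne_zero.2 (hy _ _ hne)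
        field_simp
        ring
      rw [step1, Finset.sum_congr rfl step2, Finset.sum_add_distrib]
      have hzero : ∑ p ∈ (Finset.univ : Finset (Fin N)).offDiag,
          (F p.1 p.2 * (1 / (y p.1 - y p.2))
            + (1 / 2) * G p.1 p.2 * ((y p.1 + y p.2) / (y p.1 - y p.2))) = 0 := by
        refine cancel (fun i l => F i l * (1 / (y i - y l))
            + 1 / 2 * G i l * ((y i + y l) / (y i - y l))) ?_
        intro i l hne
        rw [hFsymm l i, hGsymm l i]
        have h1 : y l - y i = -(y i - y l) := by ring
        rw [h1]
        simp only [one_div, inv_neg, div_neg]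
        ring
      rw [hzero, zero_add]
      have hGsum : ∑ p ∈ (Finset.univ : Finset (Fin N)).offDiag, (-(1 / 2 : ℝ)) * G p.1 p.2
          = -(1 / 2) * ∑ p ∈ (Finset.univ : Finset (Fin N)).offDiag, G p.1 p.2 := by
        rw [Finset.mul_sum]
      rw [hGsum]
      have hGc : ∑ p ∈ (Finset.univ : Finset (Fin N)).offDiag, G p.1 p.2
          = (((N - m) * (N - m) - (N - m) : ℕ) : ℝ) * esymm Finset.univ m y := by
        rw [← countG y m]
        rfl
      rw [hGc]
      have hq : (((N - m) * (N - m) - (N - m) : ℕ) : ℝ)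
          = ((N : ℝ) - k + 2) * ((N : ℝ) - k + 1) := by
        have hqm : m + 2 ≤ N := by omega
        have hmN : m ≤ N := by omega
        have h1 : ((N - m : ℕ) : ℝ) = (N : ℝ) - m := by
          push_cast [hmN]
          ring
        have h2 : (N - m) ≤ (N - m) * (N - m) := Nat.le_mul_of_pos_left _ (by omega)
        rw [Nat.cast_sub h2, Nat.cast_mul, h1]
        have hk' : (k : ℝ) = (m : ℝ) + 2 := by
          rw [hkm]; push_cast; ring
        rw [hk']
        ring
      rw [hq]
      ring
    rw [key] at hderiv
    rw [hm_def] at hderiv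
    exact hderiv
  · have hderiv := hasDeriv x t 0 d hode'
    have key : (∑ i : Fin N,
          (∑ B ∈ (Finset.univ.erase i).powersetCard 0, ∏ j ∈ B, y j) * d i) = 0 := by
      have h1 : ∀ i : Fin N,
          (∑ B ∈ (Finset.univ.erase i).powersetCard 0, ∏ j ∈ B, y j) * d i = d i := by
        intro i
        rw [Finset.powersetCard_zero]
        simp
      rw [Finset.sum_congr rfl fun i _ => h1 i]
      have h2 : (∑ i : Fin N, d i)
          = ∑ p ∈ (Finset.univ : Finset (Fin N)).offDiag, 1 / (y p.1 - y p.2) := by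
        exact offDiag_sum (fun i l => 1 / (y i - y l))
      rw [h2]
      refine cancel (fun i l => 1 / (y i - y l)) ?_
      intro i l _
      have h3 : y l - y i = -(y i - y l) := by ring
      rw [h3, one_div, one_div, inv_neg]
      ring
    rw [key] at hderiv
    exact hderiv
end

section
/- Let x : I → ℝ^N solve the A_{N−1} ODE x_i' = Σ_{j≠i} 1/(x_i − x_j) with x(0) = x_0 in the open Weyl chamber. Then for each 0 ≤ k ≤ N, t ↦ e_k(x(t)) is a polynomial in t of degree at most ⌊k/2⌋; moreover for k = 2l the coefficient of t^l is (−1)^l N!/(2^l l! (N−2l)!), and for k = 2l+1 the coefficient of t^l is (−1)^l (N−1)!/(2^l l! (N−2l−1)!) · Σ_{j=1}^N x_{0,j}. -/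
open Finset

-- recurrence for esymm
lemma esymm_insert {N : ℕ} (y : Fin N → ℝ) {s : Finset (Fin N)} {j : Fin N} (hj : j ∉ s) (m : ℕ) :
    esymm (insert j s) (m+1) y = esymm s (m+1) y + y j * esymm s m y := by
  unfold esymm
  rw [powersetCard_succ_insert hj, Finset.sum_union, Finset.sum_image, Finset.mul_sum]
  · congr 1
    apply Finset.sum_congr rfl
    intro B hB
    rw [Finset.prod_insert]
    intro hjB
    exact hj ((Finset.mem_powersetCard.1 hB).1 hjB)
  · intro A hA B hB hAB
    have hjA : j ∉ A := fun h => hj ((Finset.mem_powersetCard.1 hA).1 h)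
    have hjB : j ∉ B := fun h => hj ((Finset.mem_powersetCard.1 hB).1 h)
    have := congrArg (fun S => Finset.erase S j) hAB
    simpa [Finset.erase_insert hjA, Finset.erase_insert hjB] using this
  · rw [Finset.disjoint_left]
    intro A hA hA'
    have hjA : j ∉ A := fun h => hj ((Finset.mem_powersetCard.1 hA).1 h)
    rcases Finset.mem_image.1 hA' with ⟨B, _, rfl⟩
    exact hjA (Finset.mem_insert_self _ _)

lemma esymm_erase {N : ℕ} (y : Fin N → ℝ) {s : Finset (Fin N)} {j : Fin N} (hj : j ∈ s) (m : ℕ) :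
    esymm s (m+1) y = esymm (s.erase j) (m+1) y + y j * esymm (s.erase j) m y := by
  conv_lhs => rw [← Finset.insert_erase hj]
  exact esymm_insert y (Finset.notMem_erase _ _) m

lemma sum_esymm_erase {N : ℕ} (y : Fin N → ℝ) (s : Finset (Fin N)) (m : ℕ) :
    ∑ i ∈ s, esymm (s.erase i) m y = ((s.card : ℝ) - m) * esymm s m y := by
  unfold esymm
  have hcond : ∀ (i : Fin N) (B : Finset (Fin N)),
      i ∈ s ∧ B ∈ (s.erase i).powersetCard m ↔ i ∈ s \ B ∧ B ∈ s.powersetCard m := by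
    intro i B
    simp only [Finset.mem_powersetCard, Finset.subset_erase, Finset.mem_sdiff]
    tauto
  rw [Finset.sum_comm' hcond]
  by_cases hm : m ≤ s.card
  · rw [Finset.mul_sum]
    apply Finset.sum_congr rfl
    intro B hB
    rw [Finset.sum_const, nsmul_eq_mul]
    congr 1
    obtain ⟨hBs, hBc⟩ := Finset.mem_powersetCard.1 hB
    rw [Finset.card_sdiff_of_subset hBs, hBc, Nat.cast_sub hm]
  · have h1 : s.powersetCard m = ∅ := by
      rw [Finset.powersetCard_eq_empty]; omega
    rw [h1]; simp

lemma sum_prod_erase {N : ℕ} (y : Fin N → ℝ) (s : Finset (Fin N)) {i : Fin N} (hi : i ∈ s) (k : ℕ) :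
    ∑ A ∈ (s.powersetCard (k+1)).filter (fun A => i ∈ A), ∏ j ∈ A.erase i, y j
      = esymm (s.erase i) k y := by
  unfold esymm
  refine Finset.sum_bij' (fun A _ => A.erase i) (fun B _ => insert i B) ?_ ?_ ?_ ?_ ?_
  · intro A hA
    simp only [Finset.mem_filter, Finset.mem_powersetCard] at hA
    rw [Finset.mem_powersetCard]
    exact ⟨Finset.erase_subset_erase _ hA.1.1, by rw [Finset.card_erase_of_mem hA.2, hA.1.2]; omega⟩
  · intro B hB
    rw [Finset.mem_powersetCard] at hB
    have hiB : i ∉ B := (Finset.subset_erase.1 hB.1).2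
    simp only [Finset.mem_filter, Finset.mem_powersetCard]
    refine ⟨⟨Finset.insert_subset hi (Finset.subset_erase.1 hB.1).1, ?_⟩, Finset.mem_insert_self _ _⟩
    rw [Finset.card_insert_of_notMem hiB, hB.2]
  · intro A hA
    simp only [Finset.mem_filter] at hA
    exact Finset.insert_erase hA.2
  · intro B hB
    rw [Finset.mem_powersetCard] at hB
    exact Finset.erase_insert (Finset.subset_erase.1 hB.1).2
  · intro A hA; rfl

lemma antisym_sum {N : ℕ} {f : Fin N → Fin N → ℝ}
    (hf : ∀ i j, i ≠ j → f i j = - f j i) :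
    ∑ i : Fin N, ∑ j ∈ Finset.univ.erase i, f i j = 0 := by
  have hswap : ∑ i : Fin N, ∑ j ∈ Finset.univ.erase i, f i j
      = ∑ i : Fin N, ∑ j ∈ Finset.univ.erase i, f j i := by
    have hcond : ∀ i j : Fin N, i ∈ Finset.univ ∧ j ∈ Finset.univ.erase i ↔
        i ∈ Finset.univ.erase j ∧ j ∈ Finset.univ := by
      intro i j
      simp only [Finset.mem_univ, Finset.mem_erase, true_and, and_true]
      tauto
    exact Finset.sum_comm' hcond
  have : ∑ i : Fin N, ∑ j ∈ Finset.univ.erase i, f i j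
      = - ∑ i : Fin N, ∑ j ∈ Finset.univ.erase i, f i j := by
    nth_rewrite 1 [hswap]
    rw [← Finset.sum_neg_distrib]
    apply Finset.sum_congr rfl
    intro i _
    rw [← Finset.sum_neg_distrib]
    apply Finset.sum_congr rfl
    intro j hj
    have hij : i ≠ j := fun h => (Finset.mem_erase.1 hj).1 h.symm
    rw [hf j i (Ne.symm hij)]
  linarith

-- the key algebraic identity
lemma key_identity {N : ℕ} (y : Fin N → ℝ) (hy : ∀ i j : Fin N, i ≠ j → y i ≠ y j) (k : ℕ) :
    ∑ A ∈ (Finset.univ : Finset (Fin N)).powersetCard (k+2), ∑ i ∈ A,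
      (∏ j ∈ A.erase i, y j) * (∑ j ∈ Finset.univ.erase i, 1 / (y i - y j))
    = -(((N : ℝ) - k) * ((N : ℝ) - k - 1) / 2) * esymm Finset.univ k y := by
  have hsub : ∀ i j : Fin N, i ≠ j → y i - y j ≠ 0 := fun i j h => sub_ne_zero.2 (hy i j h)
  -- Step A: swap the sums
  have stepA : ∑ A ∈ (Finset.univ : Finset (Fin N)).powersetCard (k+2), ∑ i ∈ A,
      (∏ j ∈ A.erase i, y j) * (∑ j ∈ Finset.univ.erase i, 1 / (y i - y j))
      = ∑ i : Fin N, ∑ j ∈ Finset.univ.erase i,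
          esymm (Finset.univ.erase i) (k+1) y * (1 / (y i - y j)) := by
    have hcond : ∀ (A : Finset (Fin N)) (i : Fin N),
        A ∈ (Finset.univ : Finset (Fin N)).powersetCard (k+2) ∧ i ∈ A ↔
        A ∈ (Finset.univ.powersetCard (k+2)).filter (fun A => i ∈ A) ∧ i ∈ Finset.univ := by
      intro A i
      simp only [Finset.mem_filter, Finset.mem_univ, true_and, and_true]
    rw [Finset.sum_comm' hcond]
    apply Finset.sum_congr rfl
    intro i _
    rw [← Finset.sum_mul, sum_prod_erase y _ (Finset.mem_univ i) (k+1), Finset.mul_sum]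
  rw [stepA]
  -- Step C: split esymm
  have split : ∀ i : Fin N, ∀ j ∈ Finset.univ.erase i,
      esymm (Finset.univ.erase i) (k+1) y
        = esymm ((Finset.univ.erase i).erase j) (k+1) y
          + y j * esymm ((Finset.univ.erase i).erase j) k y := by
    intro i j hj
    exact esymm_erase y hj k
  have expand : ∑ i : Fin N, ∑ j ∈ Finset.univ.erase i,
      esymm (Finset.univ.erase i) (k+1) y * (1 / (y i - y j))
      = (∑ i : Fin N, ∑ j ∈ Finset.univ.erase i,
          esymm ((Finset.univ.erase i).erase j) (k+1) y * (1 / (y i - y j)))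
        + (∑ i : Fin N, ∑ j ∈ Finset.univ.erase i,
          y j * esymm ((Finset.univ.erase i).erase j) k y * (1 / (y i - y j))) := by
    rw [← Finset.sum_add_distrib]
    apply Finset.sum_congr rfl
    intro i _
    rw [← Finset.sum_add_distrib]
    apply Finset.sum_congr rfl
    intro j hj
    rw [split i j hj]; ring
  rw [expand]
  have erase_comm' : ∀ i j : Fin N,
      (Finset.univ.erase i).erase j = (Finset.univ.erase j).erase i := fun i j =>
    Finset.erase_right_comm
  -- T1 = 0
  have hT1 : (∑ i : Fin N, ∑ j ∈ Finset.univ.erase i,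
      esymm ((Finset.univ.erase i).erase j) (k+1) y * (1 / (y i - y j))) = 0 := by
    apply antisym_sum
    intro i j hij
    rw [erase_comm' i j]
    have : (1 : ℝ) / (y i - y j) = - (1 / (y j - y i)) := by
      rw [one_div, one_div, ← neg_sub (y j) (y i), inv_neg]
    rw [this]; ring
  -- T2
  have hT2 : (∑ i : Fin N, ∑ j ∈ Finset.univ.erase i,
      y j * esymm ((Finset.univ.erase i).erase j) k y * (1 / (y i - y j)))
      = -(1/2) * ∑ i : Fin N, ∑ j ∈ Finset.univ.erase i,
          esymm ((Finset.univ.erase i).erase j) k y := by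
    have haux : ∑ i : Fin N, ∑ j ∈ Finset.univ.erase i,
        (y j * esymm ((Finset.univ.erase i).erase j) k y * (1 / (y i - y j))
          + (1/2) * esymm ((Finset.univ.erase i).erase j) k y) = 0 := by
      apply antisym_sum
      intro i j hij
      rw [erase_comm' i j]
      set E := esymm ((Finset.univ.erase j).erase i) k y with hE
      have h1 : y i - y j ≠ 0 := hsub i j hij
      have h2 : y j - y i ≠ 0 := hsub j i (Ne.symm hij)
      field_simp
      ring
    have hsplit2 : ∀ i : Fin N, ∑ j ∈ Finset.univ.erase i,
        (y j * esymm ((Finset.univ.erase i).erase j) k y * (1 / (y i - y j))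
          + (1/2) * esymm ((Finset.univ.erase i).erase j) k y)
        = (∑ j ∈ Finset.univ.erase i,
            y j * esymm ((Finset.univ.erase i).erase j) k y * (1 / (y i - y j)))
          + (1/2) * ∑ j ∈ Finset.univ.erase i, esymm ((Finset.univ.erase i).erase j) k y := by
      intro i
      rw [Finset.sum_add_distrib, Finset.mul_sum]
    rw [Finset.sum_congr rfl (fun i _ => hsplit2 i), Finset.sum_add_distrib,
      ← Finset.mul_sum] at haux
    linarith
  rw [hT1, hT2, zero_add]
  -- counting
  have count : ∑ i : Fin N, ∑ j ∈ Finset.univ.erase i,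
      esymm ((Finset.univ.erase i).erase j) k y
      = ((N : ℝ) - 1 - k) * ((N : ℝ) - k) * esymm Finset.univ k y := by
    have h1 : ∀ i : Fin N, ∑ j ∈ Finset.univ.erase i,
        esymm ((Finset.univ.erase i).erase j) k y
        = ((N : ℝ) - 1 - k) * esymm (Finset.univ.erase i) k y := by
      intro i
      have := sum_esymm_erase y (Finset.univ.erase i) k
      rw [Finset.card_erase_of_mem (Finset.mem_univ i), Finset.card_univ,
        Fintype.card_fin, Nat.cast_sub i.pos] at this
      rw [this]; push_cast; ring_nf
    rw [Finset.sum_congr rfl (fun i _ => h1 i), ← Finset.mul_sum,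
      sum_esymm_erase, Finset.card_univ, Fintype.card_fin]
    ring
  rw [count]
  ring

lemma deriv_esymm {N : ℕ} {x : ℝ → Fin N → ℝ} {t : ℝ} {v : Fin N → ℝ}
    (hd : ∀ i, HasDerivAt (fun s => x s i) (v i) t) (m : ℕ) :
    HasDerivAt (fun s => esymm Finset.univ m (x s))
      (∑ A ∈ (Finset.univ : Finset (Fin N)).powersetCard m, ∑ i ∈ A,
        (∏ j ∈ A.erase i, x t j) * v i) t := by
  unfold esymm
  apply HasDerivAt.fun_sum
  intro A hA
  have := HasDerivAt.fun_finsetProd (u := A) (f := fun i s => x s i) (f' := v)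
    (x := t) (fun i _ => hd i)
  simpa [smul_eq_mul] using this

lemma eq_of_deriv_zero {I : Set ℝ} (hI : Convex ℝ I) {g : ℝ → ℝ}
    (hg : ∀ t ∈ I, HasDerivAt g 0 t) {a b : ℝ} (ha : a ∈ I) (hb : b ∈ I) : g a = g b := by
  have h := hI.norm_image_sub_le_of_norm_hasDerivWithin_le (C := 0) (f' := fun _ => (0:ℝ))
    (fun t ht => (hg t ht).hasDerivWithinAt) (fun t ht => by simp) hb ha
  rw [zero_mul] at h
  exact sub_eq_zero.1 (norm_le_zero_iff.1 h)

noncomputable def pint (q : Polynomial ℝ) : Polynomial ℝ :=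
  ∑ n ∈ Finset.range (q.natDegree + 1), Polynomial.C (q.coeff n / (n+1)) * Polynomial.X ^ (n+1)

lemma pint_eval_zero (q : Polynomial ℝ) : (pint q).eval 0 = 0 := by
  rw [pint, Polynomial.eval_finset_sum]
  apply Finset.sum_eq_zero
  intro n _
  simp

lemma derivative_pint (q : Polynomial ℝ) : Polynomial.derivative (pint q) = q := by
  unfold pint
  rw [map_sum]
  conv_rhs => rw [q.as_sum_range_C_mul_X_pow]
  apply Finset.sum_congr rfl
  intro n _
  rw [Polynomial.derivative_C_mul, Polynomial.derivative_X_pow]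
  rw [← mul_assoc, ← Polynomial.C_mul]
  have h1 : ((n : ℕ) + 1 : ℝ) ≠ 0 := by positivity
  simp only [Nat.add_sub_cancel, Nat.cast_add, Nat.cast_one]
  rw [div_mul_cancel₀ _ h1]

lemma coeff_pint (q : Polynomial ℝ) (n : ℕ) :
    (pint q).coeff (n+1) = q.coeff n / (n+1) := by
  unfold pint
  rw [Polynomial.finset_sum_coeff]
  simp_rw [Polynomial.coeff_C_mul, Polynomial.coeff_X_pow]
  by_cases h : n < q.natDegree + 1
  · rw [Finset.sum_eq_single n]
    · simp
    · intro m _ hmn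
      have : ¬(n + 1 = m + 1) := by omega
      simp [this, show n ≠ m by omega]
    · intro h'
      exact absurd (Finset.mem_range.2 h) h'
  · have hq : q.coeff n = 0 := Polynomial.coeff_eq_zero_of_natDegree_lt (by omega)
    rw [hq, zero_div]
    apply Finset.sum_eq_zero
    intro m hm
    have : ¬(n + 1 = m + 1) := by rw [Finset.mem_range] at hm; omega
    simp [this, show n ≠ m by omega]

lemma natDegree_pint (q : Polynomial ℝ) : (pint q).natDegree ≤ q.natDegree + 1 := by
  unfold pint
  apply Polynomial.natDegree_sum_le_of_forall_le
  intro n hn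
  rw [Finset.mem_range] at hn
  refine le_trans Polynomial.natDegree_mul_le ?_
  simp only [Polynomial.natDegree_C, Polynomial.natDegree_X_pow, zero_add]
  omega

lemma arith_even (N l' : ℕ) (h : 2*l' + 2 ≤ N) :
    -(((N:ℝ) - (2*l' : ℕ)) * ((N:ℝ) - (2*l' : ℕ) - 1)/2) *
      ((-1:ℝ)^l' * (Nat.factorial N : ℝ)
        / (2^l' * (Nat.factorial l' : ℝ) * (Nat.factorial (N - 2*l') : ℝ))) / ((l' : ℝ)+1)
    = (-1:ℝ)^(l'+1) * (Nat.factorial N : ℝ)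
      / (2^(l'+1) * (Nat.factorial (l'+1) : ℝ) * (Nat.factorial (N - 2*(l'+1)) : ℝ)) := by
  obtain ⟨a, rfl⟩ : ∃ a, N = a + 2*l' + 2 := ⟨N - (2*l'+2), by omega⟩
  have h2 : a + 2*l' + 2 - 2*l' = a + 2 := by omega
  have h3 : a + 2*l' + 2 - 2*(l'+1) = a := by omega
  rw [h2, h3, show a + 2 = (a+1)+1 from rfl, Nat.factorial_succ (a+1), Nat.factorial_succ a,
    Nat.factorial_succ l']
  have f1 : (Nat.factorial l' : ℝ) ≠ 0 := Nat.cast_ne_zero.2 (Nat.factorial_ne_zero _)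
  have f2 : (Nat.factorial a : ℝ) ≠ 0 := Nat.cast_ne_zero.2 (Nat.factorial_ne_zero _)
  have f3 : ((l' : ℝ) + 1) ≠ 0 := by positivity
  have f4 : (2:ℝ)^l' ≠ 0 := by positivity
  push_cast
  field_simp
  ring

lemma arith_odd (N l' : ℕ) (h : 2*l' + 3 ≤ N) :
    -(((N:ℝ) - (2*l'+1 : ℕ)) * ((N:ℝ) - (2*l'+1 : ℕ) - 1)/2) *
      ((-1:ℝ)^l' * (Nat.factorial (N-1) : ℝ)
        / (2^l' * (Nat.factorial l' : ℝ) * (Nat.factorial (N - 2*l' - 1) : ℝ))) / ((l' : ℝ)+1)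
    = (-1:ℝ)^(l'+1) * (Nat.factorial (N-1) : ℝ)
      / (2^(l'+1) * (Nat.factorial (l'+1) : ℝ) * (Nat.factorial (N - 2*(l'+1) - 1) : ℝ)) := by
  obtain ⟨a, rfl⟩ : ∃ a, N = a + 2*l' + 3 := ⟨N - (2*l'+3), by omega⟩
  have h2 : a + 2*l' + 3 - 2*l' - 1 = a + 2 := by omega
  have h3 : a + 2*l' + 3 - 2*(l'+1) - 1 = a := by omega
  have h4 : a + 2*l' + 3 - 1 = a + 2*l' + 2 := by omega
  rw [h2, h3, h4, show a + 2 = (a+1)+1 from rfl, Nat.factorial_succ (a+1), Nat.factorial_succ a,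
    Nat.factorial_succ l']
  have f1 : (Nat.factorial l' : ℝ) ≠ 0 := Nat.cast_ne_zero.2 (Nat.factorial_ne_zero _)
  have f2 : (Nat.factorial a : ℝ) ≠ 0 := Nat.cast_ne_zero.2 (Nat.factorial_ne_zero _)
  have f3 : ((l' : ℝ) + 1) ≠ 0 := by positivity
  have f4 : (2:ℝ)^l' ≠ 0 := by positivity
  push_cast
  field_simp
  ring

theorem stmt9 (N : ℕ) (I : Set ℝ) (hI : Convex ℝ I) (h0 : (0 : ℝ) ∈ I)
    (x : ℝ → Fin N → ℝ) (x0 : Fin N → ℝ) (hx0 : x 0 = x0)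
    (hcham : ∀ t ∈ I, ∀ i j : Fin N, i < j → x t j < x t i)
    (hode : ∀ t ∈ I, ∀ i : Fin N, HasDerivAt (fun s => x s i)
      (∑ j ∈ Finset.univ.erase i, 1 / (x t i - x t j)) t) :
    ∀ k : ℕ, k ≤ N → ∃ p : Polynomial ℝ,
      p.natDegree ≤ k / 2 ∧
      (∀ t ∈ I, esymm Finset.univ k (x t) = p.eval t) ∧
      (∀ l : ℕ, k = 2 * l →
        p.coeff l = (-1 : ℝ) ^ l * (Nat.factorial N : ℝ)
          / (2 ^ l * (Nat.factorial l : ℝ) * (Nat.factorial (N - 2 * l) : ℝ))) ∧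
      (∀ l : ℕ, k = 2 * l + 1 →
        p.coeff l = (-1 : ℝ) ^ l * (Nat.factorial (N - 1) : ℝ)
          / (2 ^ l * (Nat.factorial l : ℝ) * (Nat.factorial (N - 2 * l - 1) : ℝ))
          * ∑ j, x0 j) := by
  have hne : ∀ t ∈ I, ∀ i j : Fin N, i ≠ j → x t i ≠ x t j := by
    intro t ht i j hij
    rcases lt_or_gt_of_ne hij with h | h
    · exact ne_of_gt (hcham t ht i j h)
    · exact ne_of_lt (hcham t ht j i h)
  have hkey : ∀ m : ℕ, ∀ t ∈ I, HasDerivAt (fun s => esymm Finset.univ (m+2) (x s))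
      (-(((N:ℝ) - m) * ((N:ℝ) - m - 1)/2) * esymm Finset.univ m (x t)) t := by
    intro m t ht
    have h1 := deriv_esymm (fun i => hode t ht i) (m+2)
    rw [key_identity (x t) (fun i j h => hne t ht i j h) m] at h1
    exact h1
  have h1' : ∀ t ∈ I, HasDerivAt (fun s => ∑ j, x s j) (0:ℝ) t := by
    intro t ht
    have h := HasDerivAt.fun_sum (fun i (_ : i ∈ Finset.univ) => hode t ht i)
    have hz : ∑ i : Fin N, ∑ j ∈ Finset.univ.erase i, 1/(x t i - x t j) = 0 := by
      apply antisym_sum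
      intro i j hij
      rw [one_div, one_div, ← neg_sub (x t j) (x t i), inv_neg]
    rwa [hz] at h
  intro k
  induction k using Nat.strong_induction_on with
  | _ k IH =>
    intro hk
    match k, hk with
    | 0, hk =>
      refine ⟨1, by simp, ?_, ?_, ?_⟩
      · intro t ht
        simp [esymm, Finset.powersetCard_zero]
      · intro l hl
        have hl0 : l = 0 := by omega
        subst hl0
        have hf : (Nat.factorial N : ℝ) ≠ 0 := Nat.cast_ne_zero.2 (Nat.factorial_ne_zero N)
        simp [div_self hf]
      · intro l hl; omega
    | 1, hk =>
      refine ⟨Polynomial.C (∑ j, x0 j), (Polynomial.natDegree_C _).trans_le (by omega), ?_, ?_, ?_⟩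
      · intro t ht
        have e1 : ∀ y : Fin N → ℝ, esymm Finset.univ 1 y = ∑ j, y j := by
          intro y
          unfold esymm
          rw [Finset.powersetCard_one, Finset.sum_map]
          simp
        rw [e1, Polynomial.eval_C]
        have := eq_of_deriv_zero hI h1' ht h0
        rw [this, hx0]
      · intro l hl; omega
      · intro l hl
        have hl0 : l = 0 := by omega
        subst hl0
        have hf : (Nat.factorial (N-1) : ℝ) ≠ 0 := Nat.cast_ne_zero.2 (Nat.factorial_ne_zero _)
        simp [div_self hf]
    | (m+2), hk =>
      obtain ⟨p', hdeg', heval', heven', hodd'⟩ := IH m (by omega) (by omega)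
      set c : ℝ := ((N:ℝ) - m) * ((N:ℝ) - m - 1)/2 with hc
      set P : Polynomial ℝ :=
        Polynomial.C (esymm Finset.univ (m+2) x0) + pint (Polynomial.C (-c) * p') with hP
      have hPderiv : Polynomial.derivative P = Polynomial.C (-c) * p' := by
        rw [hP, Polynomial.derivative_add, Polynomial.derivative_C, derivative_pint, zero_add]
      have hPcoeff : ∀ n : ℕ, P.coeff (n+1) = -c * p'.coeff n / ((n:ℝ)+1) := by
        intro n
        rw [hP, Polynomial.coeff_add, Polynomial.coeff_C, if_neg (by omega), zero_add,
          coeff_pint, Polynomial.coeff_C_mul]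
      refine ⟨P, ?_, ?_, ?_, ?_⟩
      · rw [hP]
        refine le_trans (Polynomial.natDegree_add_le _ _) ?_
        rw [Polynomial.natDegree_C]
        refine max_le (by omega) ?_
        refine le_trans (natDegree_pint _) ?_
        have := le_trans (Polynomial.natDegree_mul_le
          (p := Polynomial.C (-c)) (q := p')) (by rw [Polynomial.natDegree_C]; omega : (Polynomial.C (-c)).natDegree + p'.natDegree ≤ p'.natDegree)
        omega
      · intro t ht
        set g : ℝ → ℝ := fun s => esymm Finset.univ (m+2) (x s) - P.eval s with hg
        have hgd : ∀ u ∈ I, HasDerivAt g 0 u := by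
          intro u hu
          have hd1 := hkey m u hu
          have hd2 : HasDerivAt (fun s => P.eval s) (-c * p'.eval u) u := by
            have h := P.hasDerivAt u
            rw [hPderiv] at h
            simpa using h
          have h3 := hd1.sub hd2
          have heq : -(((N:ℝ) - m) * ((N:ℝ) - m - 1)/2) * esymm Finset.univ m (x u)
              - (-c * p'.eval u) = 0 := by
            rw [heval' u hu, hc]; ring
          rwa [heq] at h3
        have hgt := eq_of_deriv_zero hI hgd ht h0
        have hg0 : g 0 = 0 := by
          rw [hg]
          simp only [hx0, hP, Polynomial.eval_add, Polynomial.eval_C, pint_eval_zero, add_zero]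
          ring
        have : g t = 0 := by rw [hgt, hg0]
        rw [hg] at this
        simpa [sub_eq_zero] using this
      · intro l hl
        obtain ⟨l', rfl⟩ : ∃ l', l = l'+1 := ⟨l-1, by omega⟩
        have hm : m = 2*l' := by omega
        rw [hPcoeff l', heven' l' hm, hc, hm]
        have harith := arith_even N l' (by omega)
        rw [← harith]
      · intro l hl
        obtain ⟨l', rfl⟩ : ∃ l', l = l'+1 := ⟨l-1, by omega⟩
        have hm : m = 2*l'+1 := by omega
        rw [hPcoeff l', hodd' l' hm, hc, hm]
        have harith := arith_odd N l' (by omega)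
        rw [← harith]
        ring
end

section
/- Let z = (z_1,...,z_N) be the vector of ordered zeros of the N-th Hermite polynomial H_N (orthogonal w.r.t. e^{−x²}). Then for every c > 0, the function x(t) := √(2t + c²) · z solves the A_{N−1} ODE x_i'(t) = Σ_{j≠i} 1/(x_i(t) − x_j(t)) with x(0) = c·z. -/
open Polynomial in
lemma my_hermite_deriv : ∀ n : ℕ, derivative (hermite n) = (n : ℤ[X]) * hermite (n - 1) := by
  intro n
  induction n using Nat.strong_induction_on with
  | _ n ih =>
    match n with
    | 0 => simp [hermite_zero]
    | 1 => simp [hermite_one, hermite_zero]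
    | (m + 2) =>
      have h1 : derivative (hermite (m + 1)) = ((m:ℤ[X]) + 1) * hermite m := by
        have := ih (m + 1) (by omega); push_cast at this ⊢; simpa using this
      have h2 := ih m (by omega)
      have hs : hermite (m + 1) = X * hermite m - (m : ℤ[X]) * hermite (m - 1) := by
        rw [hermite_succ, h2]
      rw [hermite_succ (m + 1), derivative_sub, derivative_mul, derivative_X, one_mul, h1,
        derivative_mul, h2]
      have hd : derivative ((m:ℤ[X]) + 1) = 0 := by
        simp
      rw [hd]
      push_cast
      linear_combination (-(m:ℤ[X]) - 1) * hs

open Polynomial in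
lemma my_hermite_ode (n : ℕ) :
    (X : ℤ[X]) * derivative (hermite n) - derivative (derivative (hermite n))
      = (n : ℤ[X]) * hermite n := by
  cases n with
  | zero => simp [hermite_zero]
  | succ m =>
    have h1 : derivative (hermite (m + 1)) = ((m:ℤ[X]) + 1) * hermite m := by
      have := my_hermite_deriv (m + 1); push_cast at this ⊢; simpa using this
    rw [h1, derivative_mul]
    have hd : derivative ((m:ℤ[X]) + 1) = 0 := by simp
    rw [hd, zero_mul, zero_add]
    have hs := hermite_succ m
    push_cast
    linear_combination ((m:ℤ[X]) + 1) * hs.symm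

open Polynomial Finset in
lemma my_deriv_prod {ι : Type*} [DecidableEq ι] (s : Finset ι) (y : ι → ℝ) :
    derivative (∏ i ∈ s, (X - C (y i))) = ∑ i ∈ s, ∏ j ∈ s.erase i, (X - C (y j)) := by
  induction s using Finset.induction_on with
  | empty => simp
  | @insert a s ha ih =>
    rw [Finset.prod_insert ha, derivative_mul, ih, Finset.sum_insert ha, Finset.erase_insert ha]
    have : ∀ i ∈ s, ∏ j ∈ (insert a s).erase i, (X - C (y j))
        = (X - C (y a)) * ∏ j ∈ s.erase i, (X - C (y j)) := by
      intro i hi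
      rw [Finset.erase_insert_of_ne (by rintro rfl; exact ha hi),
        Finset.prod_insert (fun h => ha (Finset.mem_of_mem_erase h))]
    rw [Finset.sum_congr rfl this, ← Finset.mul_sum]
    simp [derivative_sub]

open Polynomial Finset in
lemma my_key (N : ℕ) (z : Fin N → ℝ) (hz : StrictAnti z)
    (hroot : ∀ i : Fin N, aeval (Real.sqrt 2 * z i) (hermite N) = (0 : ℝ)) (i : Fin N) :
    ∑ j ∈ univ.erase i, 1 / (z i - z j) = z i := by
  classical
  set y : Fin N → ℝ := fun j => Real.sqrt 2 * z j with hy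
  have hs2 : (0:ℝ) < Real.sqrt 2 := Real.sqrt_pos.mpr (by norm_num)
  have hy_inj : Function.Injective y := fun a b hab =>
    hz.injective (mul_left_cancel₀ hs2.ne' hab)
  set P : ℝ[X] := (hermite N).map (algebraMap ℤ ℝ) with hP
  have hPeval : ∀ j, P.eval (y j) = 0 := by
    intro j
    rw [hP, eval_map, ← aeval_def]
    exact hroot j
  set q : ℝ[X] := ∏ j : Fin N, (X - C (y j)) with hq
  have hmP : P.Monic := (hermite_monic N).map _
  have hmq : q.Monic := monic_prod_of_monic _ _ fun j _ => monic_X_sub_C _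
  have hdP : P.natDegree = N := by
    rw [hP, (hermite_monic N).natDegree_map, natDegree_hermite]
  have hdq : q.natDegree = N := by
    rw [hq, natDegree_prod _ _ (fun j _ => X_sub_C_ne_zero _)]
    simp
  have hqeval : ∀ j, q.eval (y j) = 0 := by
    intro j
    rw [hq, eval_prod]
    exact Finset.prod_eq_zero (mem_univ j) (by simp)
  have hPq : P = q := by
    have hD : P - q = 0 := by
      by_cases h0 : P - q = 0
      · exact h0
      · apply eq_zero_of_natDegree_lt_card_of_eval_eq_zero (P - q) hy_inj
          (fun j => by simp [hPeval j, hqeval j])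
        rw [Fintype.card_fin]
        have hdegPq : P.degree = q.degree := by
          rw [degree_eq_natDegree hmP.ne_zero, degree_eq_natDegree hmq.ne_zero, hdP, hdq]
        have hdeg : (P - q).degree < P.degree :=
          degree_sub_lt hdegPq hmP.ne_zero (by rw [hmP.leadingCoeff, hmq.leadingCoeff])
        refine (natDegree_lt_iff_degree_lt h0).mpr ?_
        rwa [degree_eq_natDegree hmP.ne_zero, hdP] at hdeg
    exact sub_eq_zero.mp hD
  -- ODE evaluated at y i
  have hode := congrArg (Polynomial.map (algebraMap ℤ ℝ)) (my_hermite_ode N)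
  simp only [Polynomial.map_sub, Polynomial.map_mul, Polynomial.map_natCast, map_X,
    ← derivative_map] at hode
  rw [← hP] at hode
  have hodeval : y i * (derivative P).eval (y i)
      - (derivative (derivative P)).eval (y i) = 0 := by
    have := congrArg (Polynomial.eval (y i)) hode
    simp only [eval_sub, eval_mul, eval_X, eval_natCast, hPeval i, mul_zero] at this
    exact this
  -- factor q
  set K := (univ : Finset (Fin N)).erase i with hK
  set Q : ℝ[X] := ∏ j ∈ K, (X - C (y j)) with hQ
  have hfacq : q = (X - C (y i)) * Q := by
    rw [hq, hQ, hK]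
    exact (Finset.mul_prod_erase univ _ (mem_univ i)).symm
  have hdq1 : derivative q = Q + (X - C (y i)) * derivative Q := by
    rw [hfacq, derivative_mul, derivative_sub, derivative_X, derivative_C, sub_zero, one_mul]
  have hdq2 : derivative (derivative q)
      = derivative Q + (derivative Q + (X - C (y i)) * derivative (derivative Q)) := by
    rw [hdq1, derivative_add, derivative_mul, derivative_sub, derivative_X, derivative_C,
      sub_zero, one_mul]
  have hXi : (X - C (y i)).eval (y i) = 0 := by simp
  have he1 : (derivative q).eval (y i) = Q.eval (y i) := by
    rw [hdq1]; simp
  have he2 : (derivative (derivative q)).eval (y i) = 2 * (derivative Q).eval (y i) := by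
    rw [hdq2]; simp; ring
  have hEq : y i * Q.eval (y i) = 2 * (derivative Q).eval (y i) := by
    rw [hPq] at hodeval
    rw [he1, he2] at hodeval
    linarith
  -- compute the evals
  have hA : Q.eval (y i) = ∏ j ∈ K, (y i - y j) := by
    rw [hQ, eval_prod]; simp
  have hB : (derivative Q).eval (y i) = ∑ j ∈ K, ∏ l ∈ K.erase j, (y i - y l) := by
    rw [hQ, my_deriv_prod, eval_finset_sum]
    refine Finset.sum_congr rfl fun j _ => ?_
    rw [eval_prod]; simp
  have hdne : ∀ j ∈ K, y i - y j ≠ 0 := by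
    intro j hj
    have : j ≠ i := Finset.ne_of_mem_erase hj
    exact sub_ne_zero.mpr fun h => this (hy_inj h.symm)
  have hAne : (∏ j ∈ K, (y i - y j)) ≠ 0 := Finset.prod_ne_zero_iff.mpr hdne
  have hBA : ∑ j ∈ K, ∏ l ∈ K.erase j, (y i - y l)
      = (∑ j ∈ K, 1 / (y i - y j)) * ∏ j ∈ K, (y i - y j) := by
    rw [Finset.sum_mul]
    refine Finset.sum_congr rfl fun j hj => ?_
    rw [← Finset.mul_prod_erase K _ hj, one_div, ← mul_assoc, inv_mul_cancel₀ (hdne j hj), one_mul]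
  have hysum : ∑ j ∈ K, 1 / (y i - y j) = y i / 2 := by
    rw [hA, hB, hBA] at hEq
    have h' : (2 * ∑ j ∈ K, 1 / (y i - y j)) * ∏ j ∈ K, (y i - y j)
        = y i * ∏ j ∈ K, (y i - y j) := by linear_combination -hEq
    have h'' := mul_right_cancel₀ hAne h'
    linarith
  -- convert y back to z
  have hterm : ∀ j ∈ K, 1 / (z i - z j) = Real.sqrt 2 * (1 / (y i - y j)) := by
    intro j hj
    have : y i - y j = Real.sqrt 2 * (z i - z j) := by rw [hy]; ring
    have hzne : z i - z j ≠ 0 :=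
      sub_ne_zero.mpr fun h => (Finset.ne_of_mem_erase hj) (hz.injective h.symm)
    rw [this]
    field_simp
  rw [Finset.sum_congr rfl hterm, ← Finset.mul_sum, hysum, hy]
  have h2 : Real.sqrt 2 * Real.sqrt 2 = 2 := Real.mul_self_sqrt (by norm_num)
  show Real.sqrt 2 * (Real.sqrt 2 * z i / 2) = z i
  linear_combination (z i / 2) * h2


open Finset

/-- The physicists' Hermite polynomial `H_N`, expressed via the probabilists' Hermite
polynomial from Mathlib: `H_N (y) = 2^(N/2) * He_N (√2 * y)`, so the zeros of `H_N` are
exactly the points `y` with `He_N (√2 * y) = 0`. -/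
theorem stmt14 (N : ℕ) (z : Fin N → ℝ) (hz : StrictAnti z)
    (hroot : ∀ i : Fin N,
      Polynomial.aeval (Real.sqrt 2 * z i) (Polynomial.hermite N) = (0 : ℝ))
    (c : ℝ) (hc : 0 < c) :
    (∀ i : Fin N, Real.sqrt (2 * 0 + c ^ 2) * z i = c * z i) ∧
    (∀ t ∈ Set.Ici (0 : ℝ), ∀ i : Fin N,
      HasDerivAt (fun s => Real.sqrt (2 * s + c ^ 2) * z i)
        (∑ j ∈ Finset.univ.erase i,
          1 / (Real.sqrt (2 * t + c ^ 2) * z i - Real.sqrt (2 * t + c ^ 2) * z j)) t) := by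
  constructor
  · intro i
    rw [show (2 : ℝ) * 0 + c ^ 2 = c ^ 2 by ring, Real.sqrt_sq hc.le]
  · intro t ht i
    have ht0 : (0:ℝ) ≤ t := ht
    have hpos : (0:ℝ) < 2 * t + c ^ 2 := by positivity
    have hsp : (0:ℝ) < Real.sqrt (2 * t + c ^ 2) := Real.sqrt_pos.mpr hpos
    have h1 : HasDerivAt (fun s : ℝ => 2 * s + c ^ 2) 2 t := by
      simpa using ((hasDerivAt_id t).const_mul 2).add_const (c ^ 2)
    have h2 := (Real.hasDerivAt_sqrt hpos.ne').comp t h1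
    have h3 := h2.mul_const (z i)
    have hkey := my_key N z hz hroot i
    convert h3 using 1
    · exact rfl
    · exact rfl
    · exact rfl
    have hterm : ∀ j ∈ Finset.univ.erase i,
        1 / (Real.sqrt (2 * t + c ^ 2) * z i - Real.sqrt (2 * t + c ^ 2) * z j)
          = (Real.sqrt (2 * t + c ^ 2))⁻¹ * (1 / (z i - z j)) := by
      intro j hj
      rw [← mul_sub, one_div, mul_inv, one_div]
    rw [Finset.sum_congr rfl hterm, ← Finset.mul_sum, hkey]
    field_simp
end

section
/- Let ν > 0 and let z_1 > ... > z_N > 0 be the zeros of the Laguerre polynomial L_N^{(ν−1)}, and let y ∈ ℝ^N with y_i = √(2 z_i). Then for every c > 0, x(t) := √(t + c²)·y solves the B_N ODE x_i' = Σ_{j≠i}(1/(x_i−x_j)+1/(x_i+x_j)) + ν/x_i. -/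
open Finset

/-- The generalized Laguerre polynomial `L_N^{(α)}`, whose coefficient of `X^k` is
`(-1)^k / (k! (N-k)!) * ∏_{m=k}^{N-1} (α + m + 1)`. -/
noncomputable def laguerre (α : ℝ) (N : ℕ) : Polynomial ℝ :=
  ∑ k ∈ Finset.range (N + 1),
    Polynomial.C ((-1 : ℝ) ^ k
        / ((Nat.factorial k : ℝ) * (Nat.factorial (N - k) : ℝ))
        * ∏ m ∈ Finset.Ico k N, (α + m + 1)) * Polynomial.X ^ k

noncomputable def lagC (α : ℝ) (N k : ℕ) : ℝ :=
  if k ≤ N then (-1 : ℝ) ^ k / ((Nat.factorial k : ℝ) * (Nat.factorial (N - k) : ℝ))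
      * ∏ m ∈ Finset.Ico k N, (α + m + 1) else 0

lemma laguerre_coeff (α : ℝ) (N k : ℕ) : (laguerre α N).coeff k = lagC α N k := by
  unfold laguerre lagC
  rw [Polynomial.finset_sum_coeff]
  simp only [Polynomial.coeff_C_mul, Polynomial.coeff_X_pow]
  rcases le_or_gt k N with h | h
  · rw [Finset.sum_eq_single k, if_pos rfl, if_pos h, mul_one]
    · intro b _ hb; simp [Ne.symm hb]
    · intro hk; exact absurd (Finset.mem_range.2 (by omega)) hk
  · rw [if_neg (by omega), Finset.sum_eq_zero]
    intro b hb
    rw [if_neg (by simp at hb; omega), mul_zero]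

lemma lagC_rec (α : ℝ) (N k : ℕ) :
    ((k : ℝ) + 1) * (α + k + 1) * lagC α N (k + 1) = ((k : ℝ) - N) * lagC α N k := by
  unfold lagC
  rcases lt_or_ge k N with h | h
  · rw [if_pos (by omega), if_pos (by omega)]
    have h1 : Finset.Ico k N = insert k (Finset.Ico (k+1) N) := by
      exact (Finset.insert_Ico_add_one_left_eq_Ico h).symm
    rw [h1, Finset.prod_insert (by simp)]
    have h2 : N - k = (N - (k+1)) + 1 := by omega
    have h3 : ((N - k : ℕ) : ℝ) = (N : ℝ) - k := by
      rw [Nat.cast_sub h.le]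
    rw [h2, Nat.factorial_succ, Nat.factorial_succ]
    have h4 : ((N - (k+1) + 1 : ℕ) : ℝ) = (N : ℝ) - k := by
      push_cast [Nat.cast_sub (by omega : k + 1 ≤ N)]; ring
    have hk1 : ((k+1).factorial : ℝ) ≠ 0 := by positivity
    have hk2 : (k.factorial : ℝ) ≠ 0 := by positivity
    have hk3 : ((N - (k+1)).factorial : ℝ) ≠ 0 := by positivity
    have h5 : ((N - (k+1) : ℕ) : ℝ) = (N : ℝ) - k - 1 := by
      rw [Nat.cast_sub (by omega : k + 1 ≤ N)]; push_cast; ring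
    have hNk : (N : ℝ) - k ≠ 0 := by
      have : (k : ℝ) < N := by exact_mod_cast h
      linarith
    push_cast [h5]
    field_simp
    rw [sub_add_cancel, eq_div_iff hNk]
    ring
  · rcases eq_or_lt_of_le h with rfl | h'
    · rw [if_neg (by omega), if_pos le_rfl]
      simp
    · rw [if_neg (by omega), if_neg (by omega)]
      simp

lemma laguerre_ode (α : ℝ) (N : ℕ) :
    Polynomial.X * Polynomial.derivative (Polynomial.derivative (laguerre α N))
      + (Polynomial.C (α + 1) - Polynomial.X) * Polynomial.derivative (laguerre α N)
      + Polynomial.C (N : ℝ) * laguerre α N = 0 := by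
  ext n
  rw [Polynomial.coeff_zero]
  cases n with
  | zero =>
    simp only [Polynomial.coeff_add, sub_mul, Polynomial.coeff_sub, Polynomial.mul_coeff_zero,
      Polynomial.coeff_X_zero, zero_mul, Polynomial.coeff_C_mul, Polynomial.coeff_C_zero, Polynomial.coeff_derivative,
      laguerre_coeff]
    have h := lagC_rec α N 0
    push_cast at h ⊢
    linear_combination h
  | succ m =>
    simp only [Polynomial.coeff_add, sub_mul, Polynomial.coeff_sub, Polynomial.coeff_X_mul,
      Polynomial.coeff_C_mul, Polynomial.coeff_derivative, laguerre_coeff]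
    have h := lagC_rec α N (m + 1)
    push_cast at h ⊢
    linear_combination h

lemma laguerre_eq_prod (α : ℝ) (N : ℕ) (z : Fin N → ℝ) (hinj : Function.Injective z)
    (hroot : ∀ i, (laguerre α N).eval (z i) = 0) :
    laguerre α N = Polynomial.C ((-1 : ℝ) ^ N / (Nat.factorial N : ℝ))
      * ∏ j : Fin N, (Polynomial.X - Polynomial.C (z j)) := by
  set a : ℝ := (-1 : ℝ) ^ N / (Nat.factorial N : ℝ) with ha
  set W : Polynomial ℝ := ∏ j : Fin N, (Polynomial.X - Polynomial.C (z j)) with hW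
  have hWmonic : W.Monic :=
    Polynomial.monic_prod_of_monic _ _ fun i _ => Polynomial.monic_X_sub_C (z i)
  have hWdeg : W.natDegree = N := by
    rw [hW, Polynomial.natDegree_prod_of_monic _ _ fun i _ => Polynomial.monic_X_sub_C (z i)]
    simp [Polynomial.natDegree_X_sub_C]
  set D : Polynomial ℝ := laguerre α N - Polynomial.C a * W with hD
  have hcoeff : ∀ m : ℕ, N ≤ m → D.coeff m = 0 := by
    intro m hm
    rcases eq_or_lt_of_le hm with rfl | h
    · rw [hD, Polynomial.coeff_sub, laguerre_coeff, Polynomial.coeff_C_mul]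
      have : W.coeff N = 1 := by
        have := hWmonic.leadingCoeff
        rwa [Polynomial.leadingCoeff, hWdeg] at this
      rw [this, mul_one]
      unfold lagC
      rw [if_pos le_rfl]
      simp [ha]
    · rw [hD, Polynomial.coeff_sub, laguerre_coeff, Polynomial.coeff_C_mul,
        Polynomial.coeff_eq_zero_of_natDegree_lt (by omega : W.natDegree < m)]
      unfold lagC
      rw [if_neg (by omega)]
      ring
  have hDzero : D = 0 := by
    rcases Nat.eq_zero_or_pos N with rfl | hN
    · have : D.natDegree = 0 := Nat.le_zero.mp
        (Polynomial.natDegree_le_iff_coeff_eq_zero.mpr fun m hm => hcoeff m (by omega))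
      have h0 : D.coeff 0 = 0 := hcoeff 0 le_rfl
      exact Polynomial.ext fun n => by
        rcases Nat.eq_zero_or_pos n with rfl | hn
        · simpa using h0
        · rw [Polynomial.coeff_eq_zero_of_natDegree_lt (by omega), Polynomial.coeff_zero]
    · apply Polynomial.eq_zero_of_natDegree_lt_card_of_eval_eq_zero D hinj
      · intro i
        rw [hD, Polynomial.eval_sub, hroot i, Polynomial.eval_mul, hW,
          Polynomial.eval_prod]
        rw [Finset.prod_eq_zero (Finset.mem_univ i) (by simp)]
        ring
      · rw [Fintype.card_fin]
        have : D.natDegree ≤ N - 1 :=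
          Polynomial.natDegree_le_iff_coeff_eq_zero.mpr fun m hm => hcoeff m (by omega)
        omega
  exact sub_eq_zero.mp hDzero

lemma derivative_prod_X_sub {ι : Type*} [DecidableEq ι] (s : Finset ι) (z : ι → ℝ) :
    Polynomial.derivative (∏ j ∈ s, (Polynomial.X - Polynomial.C (z j)))
      = ∑ k ∈ s, ∏ j ∈ s.erase k, (Polynomial.X - Polynomial.C (z j)) := by
  induction s using Finset.induction_on with
  | empty => simp
  | insert _ _ ha ih =>
    rename_i a s
    rw [Finset.prod_insert ha, Polynomial.derivative_mul, ih, Finset.sum_insert ha,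
      Finset.erase_insert ha]
    simp only [Polynomial.derivative_sub, Polynomial.derivative_X, Polynomial.derivative_C,
      sub_zero, one_mul]
    rw [Finset.mul_sum]
    congr 1
    refine Finset.sum_congr rfl fun k hk => ?_
    rw [Finset.erase_insert_of_ne (by rintro rfl; exact ha hk),
      Finset.prod_insert (fun h => ha (Finset.mem_of_mem_erase h))]

lemma electrostatic (α : ℝ) (N : ℕ) (z : Fin N → ℝ) (hinj : Function.Injective z)
    (hroot : ∀ i, (laguerre α N).eval (z i) = 0) (i : Fin N) :
    2 * z i * ∑ j ∈ Finset.univ.erase i, 1 / (z i - z j) = z i - (α + 1) := by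
  classical
  set a : ℝ := (-1 : ℝ) ^ N / (Nat.factorial N : ℝ) with ha
  have hfac := laguerre_eq_prod α N z hinj hroot
  set W : Polynomial ℝ := ∏ j : Fin N, (Polynomial.X - Polynomial.C (z j)) with hWdef
  have hne : ∀ j ∈ Finset.univ.erase i, z i - z j ≠ 0 := by
    intro j hj
    exact sub_ne_zero.2 fun h => (Finset.mem_erase.1 hj).1 (hinj h.symm)
  set P : ℝ := ∏ j ∈ Finset.univ.erase i, (z i - z j) with hP
  have hPne : P ≠ 0 := Finset.prod_ne_zero_iff.2 hne
  set S : ℝ := ∑ j ∈ Finset.univ.erase i, 1 / (z i - z j) with hS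
  have hane : a ≠ 0 := by
    have : (Nat.factorial N : ℝ) ≠ 0 := by positivity
    simp [ha, this]
  have hder1 : Polynomial.derivative W
      = ∑ k : Fin N, ∏ j ∈ Finset.univ.erase k, (Polynomial.X - Polynomial.C (z j)) := by
    rw [hWdef, derivative_prod_X_sub]
  have hder2 : Polynomial.derivative (Polynomial.derivative W)
      = ∑ k : Fin N, ∑ l ∈ Finset.univ.erase k,
          ∏ j ∈ (Finset.univ.erase k).erase l, (Polynomial.X - Polynomial.C (z j)) := by
    rw [hder1, Polynomial.derivative_sum]
    exact Finset.sum_congr rfl fun k _ => derivative_prod_X_sub _ z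
  have hevalprod : ∀ s : Finset (Fin N), i ∈ s →
      Polynomial.eval (z i) (∏ j ∈ s, (Polynomial.X - Polynomial.C (z j))) = 0 := by
    intro s hs
    rw [Polynomial.eval_prod]
    exact Finset.prod_eq_zero hs (by simp)
  have hW1 : Polynomial.eval (z i) (Polynomial.derivative W) = P := by
    rw [hder1, Polynomial.eval_finset_sum, Finset.sum_eq_single i]
    · rw [Polynomial.eval_prod]; simp [hP]
    · intro k _ hk
      exact hevalprod _ (Finset.mem_erase.2 ⟨Ne.symm hk, Finset.mem_univ i⟩)
    · simp
  have hQ : ∀ l ∈ Finset.univ.erase i,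
      Polynomial.eval (z i) (∏ j ∈ (Finset.univ.erase i).erase l,
        (Polynomial.X - Polynomial.C (z j)))
      = ∏ j ∈ (Finset.univ.erase i).erase l, (z i - z j) := by
    intro l _
    rw [Polynomial.eval_prod]; simp
  have hW2 : Polynomial.eval (z i) (Polynomial.derivative (Polynomial.derivative W))
      = 2 * ∑ l ∈ Finset.univ.erase i,
          ∏ j ∈ (Finset.univ.erase i).erase l, (z i - z j) := by
    rw [hder2, Polynomial.eval_finset_sum]
    rw [← Finset.add_sum_erase _ _ (Finset.mem_univ i)]
    have hA : Polynomial.eval (z i) (∑ l ∈ Finset.univ.erase i,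
        ∏ j ∈ (Finset.univ.erase i).erase l, (Polynomial.X - Polynomial.C (z j)))
        = ∑ l ∈ Finset.univ.erase i, ∏ j ∈ (Finset.univ.erase i).erase l, (z i - z j) := by
      rw [Polynomial.eval_finset_sum]
      exact Finset.sum_congr rfl hQ
    have hB : ∀ k ∈ Finset.univ.erase i,
        Polynomial.eval (z i) (∑ l ∈ Finset.univ.erase k,
          ∏ j ∈ (Finset.univ.erase k).erase l, (Polynomial.X - Polynomial.C (z j)))
        = ∏ j ∈ (Finset.univ.erase i).erase k, (z i - z j) := by
      intro k hk
      have hki : k ≠ i := (Finset.mem_erase.1 hk).1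
      rw [Polynomial.eval_finset_sum, Finset.sum_eq_single i]
      · rw [Finset.erase_right_comm, Polynomial.eval_prod]; simp
      · intro l hl hli
        refine hevalprod _ (Finset.mem_erase.2 ⟨hli.symm, Finset.mem_erase.2
          ⟨Ne.symm hki, Finset.mem_univ i⟩⟩)
      · intro h
        exact absurd (Finset.mem_erase.2 ⟨Ne.symm hki, Finset.mem_univ i⟩) h
    rw [hA, Finset.sum_congr rfl hB]
    ring
  have hsum : ∑ l ∈ Finset.univ.erase i,
      ∏ j ∈ (Finset.univ.erase i).erase l, (z i - z j) = S * P := by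
    rw [hS, Finset.sum_mul]
    refine Finset.sum_congr rfl fun l hl => ?_
    rw [one_div, eq_comm, inv_mul_eq_iff_eq_mul₀ (hne l hl)]
    exact (Finset.mul_prod_erase _ _ hl).symm
  have hode := laguerre_ode α N
  rw [hfac] at hode
  have h0 := congrArg (Polynomial.eval (z i)) hode
  simp only [Polynomial.derivative_C_mul, Polynomial.eval_add, Polynomial.eval_mul,
    Polynomial.eval_sub, Polynomial.eval_C, Polynomial.eval_X, Polynomial.eval_zero] at h0
  rw [hW1, hW2, hsum, hevalprod Finset.univ (Finset.mem_univ i)] at h0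
  -- h0 : z i * (a * (2 * (S * P))) + ((α+1) - z i) * (a * P) + N * (a * 0) = 0
  have hfactor : (2 * z i * S - (z i - (α + 1))) * (a * P) = 0 := by linear_combination h0
  rcases mul_eq_zero.1 hfactor with h | h
  · linarith
  · exact absurd h (mul_ne_zero hane hPne)

theorem stmt15 (N : ℕ) (ν : ℝ) (hν : 0 < ν) (z : Fin N → ℝ) (hz : StrictAnti z)
    (hzpos : ∀ i : Fin N, 0 < z i)
    (hroot : ∀ i : Fin N, (laguerre (ν - 1) N).eval (z i) = 0)
    (y : Fin N → ℝ) (hy : ∀ i, y i = Real.sqrt (2 * z i))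
    (c : ℝ) (hc : 0 < c) :
    ∀ t ∈ Set.Ici (0 : ℝ), ∀ i : Fin N,
      HasDerivAt (fun s => Real.sqrt (s + c ^ 2) * y i)
        (∑ j ∈ Finset.univ.erase i,
            (1 / (Real.sqrt (t + c ^ 2) * y i - Real.sqrt (t + c ^ 2) * y j)
              + 1 / (Real.sqrt (t + c ^ 2) * y i + Real.sqrt (t + c ^ 2) * y j))
          + ν / (Real.sqrt (t + c ^ 2) * y i)) t := by
  intro t ht i
  have htc : 0 < t + c ^ 2 := by
    have := ht
    simp only [Set.mem_Ici] at this
    positivity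
  set r : ℝ := Real.sqrt (t + c ^ 2) with hr
  have hrpos : 0 < r := Real.sqrt_pos.2 htc
  have hypos : ∀ j, 0 < y j := by
    intro j; rw [hy j]; exact Real.sqrt_pos.2 (by linarith [hzpos j])
  have hysq : ∀ j, y j ^ 2 = 2 * z j := by
    intro j; rw [hy j, Real.sq_sqrt (by linarith [hzpos j])]
  have hinj : Function.Injective z := hz.injective
  have hE := electrostatic (ν - 1) N z hinj hroot i
  -- derivative computation
  have hd : HasDerivAt (fun s => Real.sqrt (s + c ^ 2) * y i)
      (1 / (2 * r) * 1 * y i) t := by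
    have h1 : HasDerivAt (fun s : ℝ => s + c ^ 2) 1 t := by
      simpa using (hasDerivAt_id t).add_const (c ^ 2)
    exact ((Real.hasDerivAt_sqrt htc.ne').comp t h1).mul_const (y i)
  convert hd using 1
  have hterm : ∀ j ∈ Finset.univ.erase i,
      1 / (r * y i - r * y j) + 1 / (r * y i + r * y j)
        = y i / r * (1 / (z i - z j)) := by
    intro j hj
    have hji : j ≠ i := (Finset.mem_erase.1 hj).1
    have hzne : z i - z j ≠ 0 := sub_ne_zero.2 fun h => hji (hinj h).symm
    have hyne : y i - y j ≠ 0 := by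
      intro h
      apply hzne
      have h2 : y i = y j := by linarith
      have := hysq i
      rw [h2, hysq j] at this
      linarith
    have hyadd : y i + y j ≠ 0 :=
      ne_of_gt (by linarith [hypos i, hypos j] : (0:ℝ) < y i + y j)
    have h1 : r * y i - r * y j ≠ 0 := by
      have : r * y i - r * y j = r * (y i - y j) := by ring
      rw [this]; exact mul_ne_zero hrpos.ne' hyne
    have h2 : r * y i + r * y j ≠ 0 := by
      have : r * y i + r * y j = r * (y i + y j) := by ring
      rw [this]; exact mul_ne_zero hrpos.ne' hyadd
    have hprod : (y i - y j) * (y i + y j) = 2 * (z i - z j) := by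
      linear_combination hysq i - hysq j
    field_simp
    linear_combination (-(y i)) * hprod
  rw [Finset.sum_congr rfl hterm]
  rw [← Finset.mul_sum]
  have hzine : z i ≠ 0 := (hzpos i).ne'
  have h2S : 2 * z i * ∑ j ∈ Finset.univ.erase i, 1 / (z i - z j) = z i - ν := by
    rw [hE]; ring
  have hSval : ∑ j ∈ Finset.univ.erase i, 1 / (z i - z j) = (z i - ν) / (2 * z i) := by
    rw [eq_div_iff (by positivity : (2:ℝ) * z i ≠ 0)]
    linarith [h2S]
  rw [hSval]
  have hyine := (hypos i).ne'
  field_simp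
  linear_combination (-ν) * hysq i
end

section
/- Let N = 3 and x_0 ∈ ℝ³ with x_{0,1} > x_{0,2} > x_{0,3} and x_{0,1}+x_{0,2}+x_{0,3} = 0. If x solves the A₂ ODE x_i' = Σ_{j≠i} 1/(x_i−x_j) with x(0) = x_0, then for all t ≥ 0 the coordinates x_1(t), x_2(t), x_3(t) are exactly the three roots of the cubic z³ + (e_2(x_0) − 3t)z − e_3(x_0), i.e. ∏_{k=1}^3 (z − x_k(t)) = z³ + (e_2(x_0) − 3t)z − e_3(x_0). -/
open Finset

lemma lin_of_deriv (f : ℝ → ℝ) (c : ℝ)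
    (hd : ∀ t ∈ Set.Ici (0:ℝ), HasDerivWithinAt f c (Set.Ici 0) t) :
    ∀ t ∈ Set.Ici (0:ℝ), f t = f 0 + c * t := by
  intro t ht
  have key := constant_of_has_deriv_right_zero (f := fun s => f s - c * s) (a := 0) (b := t)
    (by
      apply ContinuousOn.sub
      · exact fun s hs => ((hd s (Set.mem_Icc.1 hs).1).continuousWithinAt).mono
          (fun u hu => (Set.mem_Icc.1 hu).1)
      · exact (continuous_const.mul continuous_id).continuousOn)
    (by
      intro s hs
      have h1 : HasDerivWithinAt f c (Set.Ici s) s :=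
        (hd s (Set.mem_Ico.1 hs).1).mono (Set.Ici_subset_Ici.2 (Set.mem_Ico.1 hs).1)
      have h2 : HasDerivWithinAt (fun u => c * u) c (Set.Ici s) s := by
        simpa using ((hasDerivWithinAt_id s (Set.Ici s)).const_mul c)
      have h3 := h1.sub h2
      rw [sub_self] at h3
      exact h3)
  have := key t (Set.mem_Icc.2 ⟨ht, le_refl t⟩)
  simp at this
  linarith

theorem stmt16 (x : ℝ → Fin 3 → ℝ) (x0 : Fin 3 → ℝ)
    (hord : x0 1 < x0 0 ∧ x0 2 < x0 1) (hsum : x0 0 + x0 1 + x0 2 = 0)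
    (hstart : x 0 = x0)
    (hcham : ∀ t ∈ Set.Ici (0 : ℝ), ∀ i j : Fin 3, i < j → x t j < x t i)
    (hode : ∀ t ∈ Set.Ici (0 : ℝ), ∀ i : Fin 3, HasDerivWithinAt (fun s => x s i)
      (∑ j ∈ Finset.univ.erase i, 1 / (x t i - x t j)) (Set.Ici 0) t) :
    ∀ t ∈ Set.Ici (0 : ℝ), ∀ z : ℝ,
      (z - x t 0) * (z - x t 1) * (z - x t 2)
        = z ^ 3 + (esymm Finset.univ 2 x0 - 3 * t) * z - esymm Finset.univ 3 x0 := by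
  -- concrete esymm values
  have he2 : esymm Finset.univ 2 x0 = x0 0 * x0 1 + x0 0 * x0 2 + x0 1 * x0 2 := by
    rw [esymm, show ((univ:Finset (Fin 3)).powersetCard 2) = {{0,1},{0,2},{1,2}} from by decide,
      Finset.sum_insert (by decide), Finset.sum_insert (by decide), Finset.sum_singleton,
      Finset.prod_pair (by decide), Finset.prod_pair (by decide), Finset.prod_pair (by decide)]
    ring
  have he3 : esymm Finset.univ 3 x0 = x0 0 * x0 1 * x0 2 := by
    rw [esymm, show ((univ:Finset (Fin 3)).powersetCard 3) = {{0,1,2}} from by decide,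
      Finset.sum_singleton, show ({0,1,2} : Finset (Fin 3)) = univ from by decide,
      Fin.prod_univ_three]
  -- orderings along the flow
  have h01 : ∀ t ∈ Set.Ici (0:ℝ), x t 1 < x t 0 := fun t ht => hcham t ht 0 1 (by decide)
  have h12 : ∀ t ∈ Set.Ici (0:ℝ), x t 2 < x t 1 := fun t ht => hcham t ht 1 2 (by decide)
  have h02 : ∀ t ∈ Set.Ici (0:ℝ), x t 2 < x t 0 := fun t ht => hcham t ht 0 2 (by decide)
  -- explicit ODE
  have d0 : ∀ t ∈ Set.Ici (0:ℝ), HasDerivWithinAt (fun s => x s 0)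
      (1/(x t 0 - x t 1) + 1/(x t 0 - x t 2)) (Set.Ici 0) t := by
    intro t ht
    have := hode t ht 0
    rwa [show (Finset.univ.erase (0:Fin 3)) = {1,2} from by decide,
      Finset.sum_pair (by decide)] at this
  have d1 : ∀ t ∈ Set.Ici (0:ℝ), HasDerivWithinAt (fun s => x s 1)
      (1/(x t 1 - x t 0) + 1/(x t 1 - x t 2)) (Set.Ici 0) t := by
    intro t ht
    have := hode t ht 1
    rwa [show (Finset.univ.erase (1:Fin 3)) = {0,2} from by decide,
      Finset.sum_pair (by decide)] at this
  have d2 : ∀ t ∈ Set.Ici (0:ℝ), HasDerivWithinAt (fun s => x s 2)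
      (1/(x t 2 - x t 0) + 1/(x t 2 - x t 1)) (Set.Ici 0) t := by
    intro t ht
    have := hode t ht 2
    rwa [show (Finset.univ.erase (2:Fin 3)) = {0,1} from by decide,
      Finset.sum_pair (by decide)] at this
  -- e1 is constant 0
  have dE1 : ∀ t ∈ Set.Ici (0:ℝ), HasDerivWithinAt (fun s => x s 0 + x s 1 + x s 2)
      0 (Set.Ici 0) t := by
    intro t ht
    have h01' := ne_of_gt (sub_pos.2 (h01 t ht))
    have h12' := ne_of_gt (sub_pos.2 (h12 t ht))
    have h02' := ne_of_gt (sub_pos.2 (h02 t ht))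
    have h10' : x t 1 - x t 0 ≠ 0 := fun h => h01' (by linarith)
    have h21' : x t 2 - x t 1 ≠ 0 := fun h => h12' (by linarith)
    have h20' : x t 2 - x t 0 ≠ 0 := fun h => h02' (by linarith)
    have := ((d0 t ht).add (d1 t ht)).add (d2 t ht)
    refine this.congr_deriv ?_
    field_simp
    ring
  have hE1 : ∀ t ∈ Set.Ici (0:ℝ), x t 0 + x t 1 + x t 2 = 0 := by
    intro t ht
    have := lin_of_deriv _ 0 dE1 t ht
    rw [hstart] at this
    simpa [hsum] using this
  -- e2
  have dE2 : ∀ t ∈ Set.Ici (0:ℝ), HasDerivWithinAt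
      (fun s => x s 0 * x s 1 + x s 0 * x s 2 + x s 1 * x s 2) (-3) (Set.Ici 0) t := by
    intro t ht
    have h01' := ne_of_gt (sub_pos.2 (h01 t ht))
    have h12' := ne_of_gt (sub_pos.2 (h12 t ht))
    have h02' := ne_of_gt (sub_pos.2 (h02 t ht))
    have h10' : x t 1 - x t 0 ≠ 0 := fun h => h01' (by linarith)
    have h21' : x t 2 - x t 1 ≠ 0 := fun h => h12' (by linarith)
    have h20' : x t 2 - x t 0 ≠ 0 := fun h => h02' (by linarith)
    have hs := hE1 t ht
    have := (((d0 t ht).mul (d1 t ht)).add ((d0 t ht).mul (d2 t ht))).add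
      ((d1 t ht).mul (d2 t ht))
    refine this.congr_deriv ?_
    have hc : x t 2 = -x t 0 - x t 1 := by linarith
    rw [hc] at h12' h02' h21' h20' ⊢
    field_simp
    ring
  have hE2 : ∀ t ∈ Set.Ici (0:ℝ), x t 0 * x t 1 + x t 0 * x t 2 + x t 1 * x t 2
      = esymm Finset.univ 2 x0 - 3 * t := by
    intro t ht
    have := lin_of_deriv _ (-3) dE2 t ht
    rw [hstart] at this
    rw [he2]; linarith
  -- e3
  have dE3 : ∀ t ∈ Set.Ici (0:ℝ), HasDerivWithinAt
      (fun s => x s 0 * x s 1 * x s 2) 0 (Set.Ici 0) t := by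
    intro t ht
    have h01' := ne_of_gt (sub_pos.2 (h01 t ht))
    have h12' := ne_of_gt (sub_pos.2 (h12 t ht))
    have h02' := ne_of_gt (sub_pos.2 (h02 t ht))
    have h10' : x t 1 - x t 0 ≠ 0 := fun h => h01' (by linarith)
    have h21' : x t 2 - x t 1 ≠ 0 := fun h => h12' (by linarith)
    have h20' : x t 2 - x t 0 ≠ 0 := fun h => h02' (by linarith)
    have hs := hE1 t ht
    have := ((d0 t ht).mul (d1 t ht)).mul (d2 t ht)
    refine this.congr_deriv ?_
    have hc : x t 2 = -x t 0 - x t 1 := by linarith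
    rw [hc] at h12' h02' h21' h20' ⊢
    simp only [Pi.mul_apply]
    field_simp
    ring
  have hE3 : ∀ t ∈ Set.Ici (0:ℝ), x t 0 * x t 1 * x t 2 = esymm Finset.univ 3 x0 := by
    intro t ht
    have := lin_of_deriv _ 0 dE3 t ht
    rw [hstart] at this
    rw [he3]; linarith
  intro t ht z
  have h1 := hE1 t ht
  have h2 := hE2 t ht
  have h3 := hE3 t ht
  linear_combination (-(z^2)) * h1 + z * h2 - h3
end

section
/- Let ν > 0, N = 2, and x solve the B₂ ODE x_i' = Σ_{j≠i}(1/(x_i−x_j)+1/(x_i+x_j)) + ν/x_i with x(0) = x_0 in the open chamber {x_1 > x_2 > 0}. Then for all t ≥ 0, x_1(t)² + x_2(t)² = 4(1+ν)t + ‖x_0‖² and x_1(t)²·x_2(t)² = 4ν(1+ν)t² + 2ν‖x_0‖²t + x_{0,1}²x_{0,2}². -/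
open Finset

theorem stmt17 (ν : ℝ) (hν : 0 < ν) (x : ℝ → Fin 2 → ℝ) (x0 : Fin 2 → ℝ)
    (hord : 0 < x0 1 ∧ x0 1 < x0 0) (hstart : x 0 = x0)
    (hcham : ∀ t ∈ Set.Ici (0 : ℝ), 0 < x t 1 ∧ x t 1 < x t 0)
    (hode : ∀ t ∈ Set.Ici (0 : ℝ), ∀ i : Fin 2, HasDerivWithinAt (fun s => x s i)
      (∑ j ∈ Finset.univ.erase i,
          (1 / (x t i - x t j) + 1 / (x t i + x t j)) + ν / x t i)
      (Set.Ici 0) t) :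
    ∀ t ∈ Set.Ici (0 : ℝ),
      (x t 0) ^ 2 + (x t 1) ^ 2 = 4 * (1 + ν) * t + ((x0 0) ^ 2 + (x0 1) ^ 2) ∧
      (x t 0) ^ 2 * (x t 1) ^ 2
        = 4 * ν * (1 + ν) * t ^ 2 + 2 * ν * ((x0 0) ^ 2 + (x0 1) ^ 2) * t
          + (x0 0) ^ 2 * (x0 1) ^ 2 := by
  have hne : ∀ s ∈ Set.Ici (0 : ℝ), (x s 0 - x s 1 ≠ 0 ∧ x s 1 - x s 0 ≠ 0) ∧ x s 0 + x s 1 ≠ 0 ∧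
      x s 0 ≠ 0 ∧ x s 1 ≠ 0 := by
    intro s hs
    obtain ⟨h1, h2⟩ := hcham s hs
    refine ⟨⟨sub_ne_zero.mpr (ne_of_gt h2), sub_ne_zero.mpr (ne_of_lt h2)⟩, ?_, ?_, ne_of_gt h1⟩
    · intro hh; linarith
    · intro hh; linarith
  have hd0 : ∀ s ∈ Set.Ici (0 : ℝ), HasDerivWithinAt (fun u => x u 0)
      (1 / (x s 0 - x s 1) + 1 / (x s 0 + x s 1) + ν / x s 0) (Set.Ici 0) s := by
    intro s hs
    have := hode s hs 0
    simpa [show (Finset.univ.erase (0 : Fin 2)) = {1} from by decide] using this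
  have hd1 : ∀ s ∈ Set.Ici (0 : ℝ), HasDerivWithinAt (fun u => x u 1)
      (1 / (x s 1 - x s 0) + 1 / (x s 1 + x s 0) + ν / x s 1) (Set.Ici 0) s := by
    intro s hs
    have := hode s hs 1
    simpa [show (Finset.univ.erase (1 : Fin 2)) = {0} from by decide] using this
  have hP : ∀ s ∈ Set.Ici (0 : ℝ), HasDerivWithinAt (fun u => (x u 0) ^ 2 + (x u 1) ^ 2)
      (4 + 4 * ν) (Set.Ici 0) s := by
    intro s hs
    obtain ⟨⟨n1, n1'⟩, n2, n3, n4⟩ := hne s hs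
    have n2' : x s 1 + x s 0 ≠ 0 := by rwa [add_comm]
    have h := ((hd0 s hs).fun_pow 2).fun_add ((hd1 s hs).fun_pow 2)
    refine h.congr_deriv ?_
    field_simp
    ring
  have hPcont : ContinuousOn (fun u => (x u 0) ^ 2 + (x u 1) ^ 2) (Set.Ici 0) := by
    intro s hs
    exact (hP s hs).continuousWithinAt
  have key1 : ∀ t ∈ Set.Ici (0 : ℝ),
      (x t 0) ^ 2 + (x t 1) ^ 2 = 4 * (1 + ν) * t + ((x0 0) ^ 2 + (x0 1) ^ 2) := by
    intro t ht
    have := eq_of_has_deriv_right_eq (a := 0) (b := t)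
      (f := fun u => (x u 0) ^ 2 + (x u 1) ^ 2)
      (g := fun u => 4 * (1 + ν) * u + ((x0 0) ^ 2 + (x0 1) ^ 2))
      (f' := fun _ => 4 + 4 * ν)
      (fun s hs => (hP s hs.1).mono (Set.Ici_subset_Ici.mpr hs.1))
      (fun s _ => by
        have h : HasDerivAt (fun u : ℝ => 4 * (1 + ν) * u + ((x0 0) ^ 2 + (x0 1) ^ 2))
            (4 * (1 + ν)) s := by
          simpa using ((hasDerivAt_id s).const_mul (4 * (1 + ν))).add_const
            (((x0 0) ^ 2 + (x0 1) ^ 2))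
        convert h.hasDerivWithinAt using 1
        ring)
      (hPcont.mono (Set.Icc_subset_Ici_self))
      (by fun_prop)
      (by simp [hstart])
      t (Set.right_mem_Icc.mpr ht)
    simpa using this
  intro t ht
  refine ⟨key1 t ht, ?_⟩
  have hQ : ∀ s ∈ Set.Ici (0 : ℝ), HasDerivWithinAt (fun u => (x u 0) ^ 2 * (x u 1) ^ 2)
      (8 * ν * (1 + ν) * s + 2 * ν * ((x0 0) ^ 2 + (x0 1) ^ 2)) (Set.Ici 0) s := by
    intro s hs
    obtain ⟨⟨n1, n1'⟩, n2, n3, n4⟩ := hne s hs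
    have n2' : x s 1 + x s 0 ≠ 0 := by rwa [add_comm]
    have h := ((hd0 s hs).fun_pow 2).fun_mul ((hd1 s hs).fun_pow 2)
    have h2ν : HasDerivWithinAt (fun u => (x u 0) ^ 2 * (x u 1) ^ 2)
        (2 * ν * ((x s 0) ^ 2 + (x s 1) ^ 2)) (Set.Ici 0) s := by
      refine h.congr_deriv ?_
      field_simp
      ring
    rw [key1 s hs] at h2ν
    convert h2ν using 1
    ring
  have := eq_of_has_deriv_right_eq (a := 0) (b := t)
    (f := fun u => (x u 0) ^ 2 * (x u 1) ^ 2)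
    (g := fun u => 4 * ν * (1 + ν) * u ^ 2 + 2 * ν * ((x0 0) ^ 2 + (x0 1) ^ 2) * u
      + (x0 0) ^ 2 * (x0 1) ^ 2)
    (f' := fun s => 8 * ν * (1 + ν) * s + 2 * ν * ((x0 0) ^ 2 + (x0 1) ^ 2))
    (fun s hs => (hQ s hs.1).mono (Set.Ici_subset_Ici.mpr hs.1))
    (fun s _ => by
      have h1 : HasDerivAt (fun u : ℝ => u ^ 2) (2 * s) s := by
        simpa using (hasDerivAt_pow 2 s)
      have h2 : HasDerivAt (fun u : ℝ => u) 1 s := hasDerivAt_id s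
      have h : HasDerivAt (fun u : ℝ => 4 * ν * (1 + ν) * u ^ 2
          + 2 * ν * ((x0 0) ^ 2 + (x0 1) ^ 2) * u + (x0 0) ^ 2 * (x0 1) ^ 2)
          (4 * ν * (1 + ν) * (2 * s) + 2 * ν * ((x0 0) ^ 2 + (x0 1) ^ 2) * 1) s :=
        ((h1.const_mul (4 * ν * (1 + ν))).add
          (h2.const_mul (2 * ν * ((x0 0) ^ 2 + (x0 1) ^ 2)))).add_const
          ((x0 0) ^ 2 * (x0 1) ^ 2)
      convert h.hasDerivWithinAt using 1
      ring)
    (fun s hs => (hQ s (Set.Icc_subset_Ici_self hs)).continuousWithinAt.mono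
      Set.Icc_subset_Ici_self)
    (by fun_prop)
    (by simp [hstart])
    t (Set.right_mem_Icc.mpr ht)
  simpa using this
end

section
/- Let x : I → ℝ^N be differentiable with values in the open D_N chamber {x_1 > ... > x_{N-1} > |x_N|} and satisfy the D_N ODE x_i' = Σ_{j≠i}(1/(x_i−x_j) + 1/(x_i+x_j)). If x_N(t_0) = 0 for some t_0 ∈ I, then x_N(t) = 0 for all t ∈ I, and the first N−1 components solve the B_{N−1} ODE with parameter ν = 2, i.e. x_i' = Σ_{j≠i, j≤N−1}(1/(x_i−x_j)+1/(x_i+x_j)) + 2/x_i for i = 1,...,N−1. -/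
open Finset

/-- Pair cancellation identity. -/
lemma pair_cancel (a b A B : ℝ) (h1 : a - b ≠ 0) (h2 : a + b ≠ 0) (hP : a * A = b * B) :
    A * (1/(a-b) + 1/(a+b)) + B * (1/(b-a) + 1/(b+a)) = 0 := by
  have key : ∀ u v : ℝ, u - v ≠ 0 → u + v ≠ 0 → 1/(u-v)+1/(u+v) = 2*u/((u-v)*(u+v)) := by
    intro u v h1 h2; field_simp; ring
  have h1' : b - a ≠ 0 := fun h => h1 (by linarith)
  have h2' : b + a ≠ 0 := fun h => h2 (by linarith)
  rw [key a b h1 h2, key b a h1' h2']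
  rw [show (b-a)*(b+a) = -((a-b)*(a+b)) by ring]
  have hD : (a-b)*(a+b) ≠ 0 := mul_ne_zero h1 h2
  field_simp
  linear_combination 2 * hP

/-- The derivative of the product vanishes: algebraic part. -/
lemma prod_deriv_zero {N : ℕ} (y : Fin N → ℝ)
    (hsub : ∀ i j : Fin N, i ≠ j → y i - y j ≠ 0)
    (hadd : ∀ i j : Fin N, i ≠ j → y i + y j ≠ 0) :
    ∑ i : Fin N, (∏ k ∈ univ.erase i, y k) *
      (∑ j ∈ univ.erase i, (1 / (y i - y j) + 1 / (y i + y j))) = 0 := by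
  set g : Fin N → Fin N → ℝ := fun i j =>
    (∏ k ∈ univ.erase i, y k) * (1 / (y i - y j) + 1 / (y i + y j)) with hg
  have hsum : ∀ i : Fin N, (∏ k ∈ univ.erase i, y k) *
      (∑ j ∈ univ.erase i, (1 / (y i - y j) + 1 / (y i + y j)))
      = ∑ j ∈ univ.erase i, g i j := fun i => Finset.mul_sum _ _ _
  simp only [hsum]
  have hswap : ∑ i : Fin N, ∑ j ∈ univ.erase i, g j i
      = ∑ i : Fin N, ∑ j ∈ univ.erase i, g i j := by
    rw [Finset.sum_sigma', Finset.sum_sigma']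
    apply Finset.sum_nbij' (fun p => ⟨p.2, p.1⟩) (fun p => ⟨p.2, p.1⟩) <;>
      simp [Finset.mem_erase, eq_comm, ne_comm]
  have hpair : ∀ i j : Fin N, i ≠ j → g i j + g j i = 0 := by
    intro i j hij
    have hP : y i * ∏ k ∈ univ.erase i, y k = y j * ∏ k ∈ univ.erase j, y k := by
      rw [Finset.mul_prod_erase _ _ (mem_univ i), Finset.mul_prod_erase _ _ (mem_univ j)]
    exact pair_cancel (y i) (y j) _ _ (hsub i j hij) (hadd i j hij) hP
  have h2 : (2 : ℝ) * ∑ i : Fin N, ∑ j ∈ univ.erase i, g i j = 0 := by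
    rw [two_mul]
    nth_rewrite 2 [← hswap]
    rw [← Finset.sum_add_distrib]
    apply Finset.sum_eq_zero
    intro i _
    rw [← Finset.sum_add_distrib]
    apply Finset.sum_eq_zero
    intro j hj
    exact hpair i j (fun h => (Finset.mem_erase.1 hj).1 h.symm)
  have := mul_eq_zero.1 h2
  simpa using this

theorem stmt18 (N : ℕ) (hN : 2 ≤ N) (I : Set ℝ) (hI : Convex ℝ I)
    (x : ℝ → Fin N → ℝ)
    (hcham : ∀ t ∈ I, ∀ i j : Fin N, i < j → |x t j| < x t i)
    (hode : ∀ t ∈ I, ∀ i : Fin N, HasDerivWithinAt (fun s => x s i)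
      (∑ j ∈ Finset.univ.erase i, (1 / (x t i - x t j) + 1 / (x t i + x t j))) I t)
    (t0 : ℝ) (ht0 : t0 ∈ I) (hlast : x t0 ⟨N - 1, by omega⟩ = 0) :
    (∀ t ∈ I, x t ⟨N - 1, by omega⟩ = 0) ∧
    (∀ t ∈ I, ∀ i : Fin N, (i : ℕ) < N - 1 →
      HasDerivWithinAt (fun s => x s i)
        (∑ j ∈ (Finset.univ.erase i).erase ⟨N - 1, by omega⟩,
            (1 / (x t i - x t j) + 1 / (x t i + x t j))
          + 2 / x t i) I t) := by
  set last : Fin N := ⟨N - 1, by omega⟩ with hlastdef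
  -- nonvanishing of differences and sums
  have hsub : ∀ t ∈ I, ∀ i j : Fin N, i ≠ j → x t i - x t j ≠ 0 := by
    intro t ht i j hij
    rcases lt_or_gt_of_ne hij with h | h
    · have := hcham t ht i j h; have := abs_lt.1 this; intro hc; linarith [this.1, this.2]
    · have := hcham t ht j i h; have := abs_lt.1 this; intro hc; linarith [this.1, this.2]
  have hadd : ∀ t ∈ I, ∀ i j : Fin N, i ≠ j → x t i + x t j ≠ 0 := by
    intro t ht i j hij
    rcases lt_or_gt_of_ne hij with h | h
    · have := abs_lt.1 (hcham t ht i j h); intro hc; linarith [this.1, this.2]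
    · have := abs_lt.1 (hcham t ht j i h); intro hc; linarith [this.1, this.2]
  -- the product has zero derivative
  have hprod : ∀ t ∈ I, HasDerivWithinAt (fun s => ∏ i : Fin N, x s i) 0 I t := by
    intro t ht
    have h := HasDerivWithinAt.finset_prod
      (u := Finset.univ) (f := fun i s => x s i)
      (f' := fun i => ∑ j ∈ Finset.univ.erase i, (1 / (x t i - x t j) + 1 / (x t i + x t j)))
      (s := I) (x := t) (fun i _ => hode t ht i)
    have hz : (∑ i : Fin N, (∏ j ∈ univ.erase i, x t j) •
        (∑ j ∈ Finset.univ.erase i, (1 / (x t i - x t j) + 1 / (x t i + x t j)))) = 0 := by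
      simp only [smul_eq_mul]
      exact prod_deriv_zero (x t) (hsub t ht) (hadd t ht)
    rw [hz] at h
    have e : (∏ i : Fin N, fun s => x s i) = fun s => ∏ i : Fin N, x s i := by
      funext s; simp [Finset.prod_apply]
    rw [e] at h
    exact h
  -- the product is constantly zero
  have hconst : ∀ t ∈ I, (∏ i : Fin N, x t i) = 0 := by
    intro t ht
    have hb := hI.norm_image_sub_le_of_norm_hasDerivWithin_le
      (f := fun s => ∏ i : Fin N, x s i) (f' := fun _ => 0) (C := 0)
      (fun s hs => hprod s hs) (fun s _ => by simp) ht0 ht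
    have h0 : (∏ i : Fin N, x t0 i) = 0 :=
      Finset.prod_eq_zero (Finset.mem_univ last) hlast
    have : ‖(∏ i : Fin N, x t i) - (∏ i : Fin N, x t0 i)‖ ≤ 0 := by simpa using hb
    have := le_antisymm this (norm_nonneg _)
    rw [norm_eq_zero, sub_eq_zero] at this
    rw [this, h0]
  -- hence the last coordinate is zero
  have part1 : ∀ t ∈ I, x t last = 0 := by
    intro t ht
    rcases Finset.prod_eq_zero_iff.1 (hconst t ht) with ⟨i, _, hi⟩
    by_cases h : i = last
    · rwa [h] at hi
    · exfalso
      have hilt : i < last := by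
        have : (i : ℕ) < N - 1 := by
          have := i.isLt
          rcases lt_or_eq_of_le (Nat.le_of_lt_succ (by omega : (i:ℕ) < (N-1)+1)) with h' | h'
          · exact h'
          · exact absurd (Fin.ext h' : i = last) h
        exact this
      have := hcham t ht i last hilt
      rw [hi] at this
      exact absurd this (not_lt.2 (abs_nonneg _))
  refine ⟨part1, ?_⟩
  intro t ht i hiN
  have hine : i ≠ last := by
    intro h; rw [h] at hiN; simp [hlastdef] at hiN
  have hmem : last ∈ Finset.univ.erase i :=
    Finset.mem_erase.2 ⟨fun h => hine h.symm, Finset.mem_univ _⟩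
  have hsplit : (∑ j ∈ Finset.univ.erase i, (1 / (x t i - x t j) + 1 / (x t i + x t j)))
      = (∑ j ∈ (Finset.univ.erase i).erase last,
          (1 / (x t i - x t j) + 1 / (x t i + x t j))) + 2 / x t i := by
    rw [← Finset.add_sum_erase _ _ hmem, part1 t ht]
    ring
  have h := hode t ht i
  rw [hsplit] at h
  exact h
end

section
/- Let x : I → ℝ^N solve the D_N ODE x_i' = Σ_{j≠i}(1/(x_i−x_j)+1/(x_i+x_j)) on the open D_N chamber {x_1 > ... > x_{N-1} > |x_N|}. Then the product ∏_{i=1}^N x_i(t)² is constant in t; equivalently d/dt ẽ_N(x(t)) = 0 where ẽ_N(x) = x_1²···x_N². -/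
open Finset

theorem stmt19 (N : ℕ) (I : Set ℝ) (x : ℝ → Fin N → ℝ)
    (hcham : ∀ t ∈ I, ∀ i j : Fin N, i < j → |x t j| < x t i)
    (hode : ∀ t ∈ I, ∀ i : Fin N, HasDerivAt (fun s => x s i)
      (∑ j ∈ Finset.univ.erase i, (1 / (x t i - x t j) + 1 / (x t i + x t j))) t) :
    ∀ t ∈ I, HasDerivAt (fun s => ∏ i, (x s i) ^ 2) (0 : ℝ) t := by
  intro t ht
  set a : Fin N → ℝ := x t with ha
  -- denominators nonzero
  have hsub : ∀ i j : Fin N, i ≠ j → a i - a j ≠ 0 := by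
    intro i j hij
    rcases lt_or_gt_of_ne hij with h | h
    · have := hcham t ht i j h
      have := abs_lt.mp this
      nlinarith [this.1, this.2]
    · have := hcham t ht j i h
      have := abs_lt.mp this
      nlinarith [this.1, this.2]
  have hadd : ∀ i j : Fin N, i ≠ j → a i + a j ≠ 0 := by
    intro i j hij
    rcases lt_or_gt_of_ne hij with h | h
    · have := abs_lt.mp (hcham t ht i j h)
      nlinarith [this.1, this.2]
    · have := abs_lt.mp (hcham t ht j i h)
      nlinarith [this.1, this.2]
  set P : ℝ := ∏ k, (a k) ^ 2 with hP
  set d : Fin N → ℝ := fun i => ∑ j ∈ Finset.univ.erase i, (1 / (a i - a j) + 1 / (a i + a j))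
    with hd
  have hderiv : HasDerivAt (fun s => ∏ i, (x s i) ^ 2)
      (∑ i, (∏ j ∈ Finset.univ.erase i, (a j) ^ 2) • ((2 : ℕ) * a i ^ 1 * d i)) t := by
    exact HasDerivAt.fun_finsetProd (fun i _ => (hode t ht i).pow 2)
  -- the sum vanishes
  have hterm : ∀ i : Fin N, (∏ j ∈ Finset.univ.erase i, (a j) ^ 2) • ((2 : ℕ) * a i ^ 1 * d i)
      = ∑ j ∈ Finset.univ.erase i, 4 * P / (a i ^ 2 - a j ^ 2) := by
    intro i
    rw [smul_eq_mul, hd]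
    rw [Finset.mul_sum, Finset.mul_sum]
    refine Finset.sum_congr rfl fun j hj => ?_
    have hij : i ≠ j := (Finset.ne_of_mem_erase hj).symm
    have h1 := hsub i j hij
    have h2 := hadd i j hij
    have hQ : a i ^ 2 * ∏ k ∈ Finset.univ.erase i, (a k) ^ 2 = P := by
      exact Finset.mul_prod_erase Finset.univ (fun k => (a k) ^ 2) (Finset.mem_univ i)
    have hD : a i ^ 2 - a j ^ 2 ≠ 0 := fun h => mul_ne_zero h1 h2 (by linear_combination h)
    field_simp
    linear_combination (4 * (a i ^ 2 - a j ^ 2)) * hQ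
  have hzero : (∑ i, (∏ j ∈ Finset.univ.erase i, (a j) ^ 2) • ((2 : ℕ) * a i ^ 1 * d i)) = 0 := by
    rw [Finset.sum_congr rfl fun i _ => hterm i]
    set S : ℝ := ∑ i : Fin N, ∑ j ∈ Finset.univ.erase i, 4 * P / (a i ^ 2 - a j ^ 2) with hS
    have hswap : S = ∑ j : Fin N, ∑ i ∈ Finset.univ.erase j, 4 * P / (a i ^ 2 - a j ^ 2) := by
      rw [hS]
      exact Finset.sum_comm' (by
        intro i j
        simp [Finset.mem_erase, eq_comm, ne_comm])
    have hneg : S = -S := by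
      nth_rewrite 1 [hswap]
      rw [hS, ← Finset.sum_neg_distrib]
      refine Finset.sum_congr rfl fun j _ => ?_
      rw [← Finset.sum_neg_distrib]
      refine Finset.sum_congr rfl fun i _ => ?_
      rw [show a i ^ 2 - a j ^ 2 = -(a j ^ 2 - a i ^ 2) from by ring, div_neg]
    linarith
  exact hzero ▸ hderiv
end
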